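/- arXiv:1909.11319 — 10 statements merged into one kernel-verified Lean document; each statement's English description precedes it below -/
import Mathlib

section
/- Let a be a nonzero integer, let k ≥ 1 be an integer, and let y be a rational number with |y| ≥ 1 and y ≠ 1. Then [a, 2, …, 2, y] (with k copies of 2 between a and y) = [a − 1, −(k+1), y − 1]. -/
/-- The (subtractive) continued fraction value of a finite list of rationals:
`cf [] = 0` and `cf (a :: t) = (a - cf t)⁻¹`. -/
def cf : List ℚ → ℚ
  | [] => 0
  | a :: t => (a - cf t)⁻¹

lemma cf_denom_ne (y : ℚ) (hy : 1 ≤ |y|) (k : ℕ) : ((k : ℚ) + 1) * y - k ≠ 0 := by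
  intro h
  rcases abs_cases y with ⟨h1, _⟩ | ⟨h1, _⟩ <;>
    nlinarith [Nat.cast_nonneg (α := ℚ) k]

lemma cf_rep (y : ℚ) (hy : 1 ≤ |y|) :
    ∀ k : ℕ, cf (List.replicate k 2 ++ [y]) =
      ((k : ℚ) * y - ((k : ℚ) - 1)) / (((k : ℚ) + 1) * y - k) := by
  intro k
  have hy0 : y ≠ 0 := by intro h; rw [h] at hy; norm_num at hy
  induction k with
  | zero =>
    show (y - cf [])⁻¹ = _
    simp only [cf]
    push_cast
    rw [sub_zero, inv_eq_one_div]
    ring_nf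
  | succ n ih =>
    have hn := cf_denom_ne y hy n
    have hn1 := cf_denom_ne y hy (n + 1)
    push_cast at hn1
    rw [List.replicate_succ, List.cons_append]
    show (2 - cf (List.replicate n 2 ++ [y]))⁻¹ = _
    rw [ih]
    have h2 : 2 - ((n : ℚ) * y - ((n : ℚ) - 1)) / (((n : ℚ) + 1) * y - n) =
        (((n : ℚ) + 1 + 1) * y - ((n : ℚ) + 1)) / (((n : ℚ) + 1) * y - n) := by
      rw [eq_div_iff hn, sub_mul, div_mul_cancel₀ _ hn]
      ring
    rw [h2, inv_div]
    push_cast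
    rw [div_eq_div_iff hn1 (by push_cast; exact hn1)]
    ring

theorem stmt_2 (a : ℤ) (ha : a ≠ 0) (k : ℕ) (hk : 1 ≤ k) (y : ℚ)
    (hy1 : 1 ≤ |y|) (hy2 : y ≠ 1) :
    cf ((a : ℚ) :: (List.replicate k (2 : ℚ) ++ [y])) =
      cf [(a : ℚ) - 1, -((k : ℚ) + 1), y - 1] := by
  have hN := cf_denom_ne y hy1 k
  have hy1' : y - 1 ≠ 0 := sub_ne_zero.mpr hy2
  show (↑a - cf (List.replicate k 2 ++ [y]))⁻¹ = ((a : ℚ) - 1 - cf [-((k : ℚ) + 1), y - 1])⁻¹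
  rw [cf_rep y hy1]
  congr 1
  show _ = (a : ℚ) - 1 - (-((k : ℚ) + 1) - (y - 1 - cf [])⁻¹)⁻¹
  simp only [cf]
  rw [sub_zero]
  have h1 : -((k : ℚ) + 1) - (y - 1)⁻¹ = (-(((k : ℚ) + 1) * y - k)) / (y - 1) := by
    field_simp; ring
  rw [h1, inv_div, div_neg, sub_neg_eq_add]
  have key : ((k : ℚ) * y - ((k : ℚ) - 1)) / (((k : ℚ) + 1) * y - k) + (y - 1) / (((k : ℚ) + 1) * y - k) = 1 := by
    rw [← add_div, div_eq_one_iff_eq hN]; ring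
  linarith
end

section
/- Let a be a nonzero integer and let b, c ≥ 1 be integers. Then [a, 2, …, 2, 4, 2, …, 2] (with b copies of 2 before the entry 4 and c copies of 2 after it) = [a − 1, −(b+1), 2, −(c+1)]. -/
lemma cf_rep2 (c : ℕ) : cf (List.replicate c 2) = c/(c+1) := by
  induction c with
  | zero => simp [cf]
  | succ n ih =>
    have h : (n:ℚ)+1 ≠ 0 := by positivity
    have h2 : (n:ℚ)+2 ≠ 0 := by positivity
    have key : (2:ℚ) - (n:ℚ)/((n:ℚ)+1) = ((n:ℚ)+2)/((n:ℚ)+1) := by field_simp; ring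
    rw [List.replicate_succ]
    show (2 - cf (List.replicate n 2))⁻¹ = _
    rw [ih, key, inv_div]
    push_cast
    ring

lemma cf_key (c : ℕ) : ∀ n : ℕ, cf (List.replicate n 2 ++ 4 :: List.replicate c 2) =
    ((n:ℚ)*(2*c+3)+c+1)/(((n:ℚ)+1)*(2*c+3)+c+1) := by
  intro n
  induction n with
  | zero =>
    have h : (c:ℚ)+1 ≠ 0 := by positivity
    have h2 : (3:ℚ)*c+4 ≠ 0 := by positivity
    have key : (4:ℚ) - (c:ℚ)/((c:ℚ)+1) = ((3:ℚ)*c+4)/((c:ℚ)+1) := by field_simp; ring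
    show (4 - cf (List.replicate c 2))⁻¹ = _
    rw [cf_rep2, key, inv_div]
    rw [div_eq_div_iff h2 (by positivity)]
    ring
  | succ n ih =>
    have hD1 : ((n:ℚ)+1)*(2*c+3)+c+1 ≠ 0 := by positivity
    have hD2 : ((n:ℚ)+2)*(2*c+3)+c+1 ≠ 0 := by positivity
    have key : (2:ℚ) - ((n:ℚ)*(2*c+3)+c+1)/(((n:ℚ)+1)*(2*c+3)+c+1)
        = (((n:ℚ)+2)*(2*c+3)+c+1)/(((n:ℚ)+1)*(2*c+3)+c+1) := by
      field_simp; ring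
    rw [List.replicate_succ]
    show (2 - cf (List.replicate n 2 ++ 4 :: List.replicate c 2))⁻¹ = _
    rw [ih, key, inv_div]
    push_cast
    rw [div_eq_div_iff (by positivity) (by positivity)]
    ring

theorem stmt_4 (a : ℤ) (ha : a ≠ 0) (b c : ℕ) (hb : 1 ≤ b) (hc : 1 ≤ c) :
    cf ((a : ℚ) :: (List.replicate b (2 : ℚ) ++ (4 : ℚ) :: List.replicate c (2 : ℚ))) =
      cf [(a : ℚ) - 1, -((b : ℚ) + 1), 2, -((c : ℚ) + 1)] := by
  have hc1 : (c:ℚ)+1 ≠ 0 := by positivity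
  have h23 : 2*(c:ℚ)+3 ≠ 0 := by positivity
  have hDb1 : ((b:ℚ)+1)*(2*(c:ℚ)+3)+(c:ℚ)+1 ≠ 0 := by positivity
  have hN : (a:ℚ)*(((b:ℚ)+1)*(2*(c:ℚ)+3)+(c:ℚ)+1) - ((b:ℚ)*(2*(c:ℚ)+3)+(c:ℚ)+1) ≠ 0 := by
    have hDb1' : (0:ℚ) < ((b:ℚ)+1)*(2*(c:ℚ)+3)+(c:ℚ)+1 := by positivity
    have hDb : (0:ℚ) ≤ (b:ℚ)*(2*(c:ℚ)+3)+(c:ℚ)+1 := by positivity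
    rcases ha.lt_or_gt with h|h
    · have h1' : a ≤ -1 := by omega
      have h1 : (a:ℚ) ≤ -1 := by exact_mod_cast h1'
      have : (a:ℚ)*(((b:ℚ)+1)*(2*(c:ℚ)+3)+(c:ℚ)+1) ≤ -(((b:ℚ)+1)*(2*(c:ℚ)+3)+(c:ℚ)+1) := by
        nlinarith
      exact ne_of_lt (by nlinarith)
    · have h1' : 1 ≤ a := by omega
      have h1 : (1:ℚ) ≤ (a:ℚ) := by exact_mod_cast h1'
      have hb0 : (0:ℚ) ≤ (b:ℚ) * (2*(c:ℚ)+3) + (c:ℚ) := by positivity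
      have hb1 : (1:ℚ) ≤ (b:ℚ) * (2*(c:ℚ)+3) + (c:ℚ) + 1 := by linarith
      have : ((b:ℚ)+1)*(2*(c:ℚ)+3)+(c:ℚ)+1 ≤ (a:ℚ)*(((b:ℚ)+1)*(2*(c:ℚ)+3)+(c:ℚ)+1) := by
        nlinarith
      exact ne_of_gt (by nlinarith)
  show ((a:ℚ) - cf (List.replicate b 2 ++ 4 :: List.replicate c 2))⁻¹ = _
  rw [cf_key]
  rw [show (a:ℚ) - ((b:ℚ)*(2*(c:ℚ)+3)+(c:ℚ)+1)/(((b:ℚ)+1)*(2*(c:ℚ)+3)+(c:ℚ)+1)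
      = ((a:ℚ)*(((b:ℚ)+1)*(2*(c:ℚ)+3)+(c:ℚ)+1) - ((b:ℚ)*(2*(c:ℚ)+3)+(c:ℚ)+1))
        / (((b:ℚ)+1)*(2*(c:ℚ)+3)+(c:ℚ)+1) from by field_simp]
  rw [inv_div]
  simp only [cf, sub_zero]
  rw [show (2:ℚ) - (-((c:ℚ)+1))⁻¹ = (2*(c:ℚ)+3)/((c:ℚ)+1) from by rw [inv_neg, sub_neg_eq_add]; field_simp; ring]
  rw [inv_div]
  rw [show -((b:ℚ)+1) - ((c:ℚ)+1)/(2*(c:ℚ)+3)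
      = -((((b:ℚ)+1)*(2*(c:ℚ)+3)+(c:ℚ)+1)/(2*(c:ℚ)+3)) from by field_simp; ring]
  rw [inv_neg, inv_div]
  rw [show (a:ℚ) - 1 - -((2*(c:ℚ)+3)/(((b:ℚ)+1)*(2*(c:ℚ)+3)+(c:ℚ)+1))
      = ((a:ℚ)*(((b:ℚ)+1)*(2*(c:ℚ)+3)+(c:ℚ)+1) - ((b:ℚ)*(2*(c:ℚ)+3)+(c:ℚ)+1))
        / (((b:ℚ)+1)*(2*(c:ℚ)+3)+(c:ℚ)+1) from by field_simp; ring]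
  rw [inv_div]
end

section
/- Let a be a nonzero integer and let b, c ≥ 1 be integers. Then [a, −2, …, −2, −4, −2, …, −2] (with b copies of −2 before the entry −4 and c copies of −2 after it) = [a + 1, b + 1, −2, c + 1]. -/
lemma cf_rep_s5 (n : ℕ) (l : List ℚ) (h1 : -1 < cf l) (h2 : cf l ≤ 0) :
    cf (List.replicate n (-2 : ℚ) ++ l) =
      ((1 - (n:ℚ)) * cf l - n) / ((n:ℚ) * cf l + n + 1) ∧
    -1 < cf (List.replicate n (-2 : ℚ) ++ l) ∧
    cf (List.replicate n (-2 : ℚ) ++ l) ≤ 0 := by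
  induction n with
  | zero => simpa using ⟨h1, h2⟩
  | succ n ih =>
    obtain ⟨hf, hgt, hle⟩ := ih
    have hrep : List.replicate (n+1) (-2:ℚ) ++ l = -2 :: (List.replicate n (-2:ℚ) ++ l) := by
      simp [List.replicate_succ]
    set y := cf (List.replicate n (-2:ℚ) ++ l) with hy
    have hcf : cf (List.replicate (n+1) (-2:ℚ) ++ l) = (-2 - y)⁻¹ := by
      rw [hrep]; rfl
    have hd : (-2 : ℚ) - y < -1 := by linarith
    have hd' : (-2:ℚ) - y ≠ 0 := by linarith
    have hinv : ((-2:ℚ) - y) * ((-2:ℚ) - y)⁻¹ = 1 := mul_inv_cancel₀ hd'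
    have hiu : ((-2:ℚ) - y)⁻¹ < 0 := inv_neg''.mpr (by linarith)
    have hil : -1 < ((-2:ℚ) - y)⁻¹ := by nlinarith
    refine ⟨?_, by rw [hcf]; exact hil, by rw [hcf]; linarith⟩
    rw [hcf]
    have hden : (0:ℚ) < (n:ℚ) * cf l + n + 1 := by nlinarith [Nat.cast_nonneg (α := ℚ) n]
    have hden2 : (0:ℚ) < ((n:ℚ)+1) * cf l + (n:ℚ) + 2 := by nlinarith [Nat.cast_nonneg (α := ℚ) n]
    have hstep : (-2:ℚ) - y = (-(((n:ℚ)+1)*cf l + (n:ℚ) + 2))/((n:ℚ)*cf l + (n:ℚ)+1) := by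
      rw [hf, eq_div_iff (ne_of_gt hden), sub_mul (-2:ℚ), div_mul_cancel₀ _ (ne_of_gt hden)]; ring
    rw [hstep, inv_div]
    rw [div_eq_div_iff (ne_of_lt (by linarith)) (by push_cast; exact ne_of_gt (by nlinarith [Nat.cast_nonneg (α := ℚ) n]))]
    push_cast
    ring

theorem stmt_5 (a : ℤ) (ha : a ≠ 0) (b c : ℕ) (hb : 1 ≤ b) (hc : 1 ≤ c) :
    cf ((a : ℚ) :: (List.replicate b (-2 : ℚ) ++ (-4 : ℚ) :: List.replicate c (-2 : ℚ))) =
      cf [(a : ℚ) + 1, (b : ℚ) + 1, -2, (c : ℚ) + 1] := by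
  have hc1 : (0:ℚ) < (c:ℚ) + 1 := by positivity
  have h34 : (0:ℚ) < 3*(c:ℚ) + 4 := by positivity
  have h23 : (0:ℚ) < 2*(c:ℚ) + 3 := by positivity
  have hQ : (0:ℚ) < 2*(b:ℚ)*(c:ℚ) + 3*(b:ℚ) + 3*(c:ℚ) + 4 := by positivity
  set Q : ℚ := 2*(b:ℚ)*(c:ℚ) + 3*(b:ℚ) + 3*(c:ℚ) + 4 with hQdef
  set P : ℚ := 2*(b:ℚ)*(c:ℚ) + 3*(b:ℚ) + (c:ℚ) + 1 with hPdef
  have hQP : Q - P = 2*(c:ℚ) + 3 := by rw [hQdef, hPdef]; ring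
  have hPpos : (0:ℚ) < P := by rw [hPdef]; positivity
  -- a*Q + P ≠ 0
  have haQP : (a:ℚ) * Q + P ≠ 0 := by
    rcases ha.lt_or_gt with h | h
    · have h' : a ≤ -1 := by omega
      have : (a:ℚ) ≤ -1 := by exact_mod_cast h'
      have : (a:ℚ) * Q ≤ -Q := by nlinarith
      intro hcon; nlinarith
    · have : (1:ℚ) ≤ (a:ℚ) := by exact_mod_cast h
      have : Q ≤ (a:ℚ) * Q := by nlinarith
      intro hcon; nlinarith
  have h34ne : (3*(c:ℚ)+4) ≠ 0 := ne_of_gt h34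
  have hQne : 2*(b:ℚ)*(c:ℚ) + 3*(b:ℚ) + 3*(c:ℚ) + 4 ≠ 0 := ne_of_gt (by positivity)
  have h23ne : (2*(c:ℚ)+3) ≠ 0 := ne_of_gt h23
  -- value of replicate c
  obtain ⟨h1, _, _⟩ := cf_rep_s5 c [] (by norm_num [cf]) (by norm_num [cf])
  rw [List.append_nil] at h1
  have h1' : cf (List.replicate c (-2:ℚ)) = -((c:ℚ)/((c:ℚ)+1)) := by
    rw [h1]; norm_num [cf]; field_simp
  -- value of -4 :: replicate c
  have ht : cf ((-4:ℚ) :: List.replicate c (-2:ℚ)) = -(((c:ℚ)+1)/(3*(c:ℚ)+4)) := by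
    show ((-4:ℚ) - cf (List.replicate c (-2:ℚ)))⁻¹ = _
    rw [h1', show ((-4:ℚ) - -((c:ℚ)/((c:ℚ)+1))) = -((3*(c:ℚ)+4)/((c:ℚ)+1)) from by
      field_simp; ring, inv_neg, inv_div]
  have htfrac : (0:ℚ) ≤ ((c:ℚ)+1)/(3*(c:ℚ)+4) := by positivity
  have htfrac1 : ((c:ℚ)+1)/(3*(c:ℚ)+4) < 1 := by rw [div_lt_one h34]; linarith
  obtain ⟨H1, _, _⟩ := cf_rep_s5 b ((-4:ℚ) :: List.replicate c (-2:ℚ))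
    (by rw [ht]; linarith) (by rw [ht]; linarith)
  -- LHS
  have hbd : (b:ℚ) * -(((c:ℚ)+1)/(3*(c:ℚ)+4)) + (b:ℚ) + 1 ≠ 0 := by
    rw [show (b:ℚ) * -(((c:ℚ)+1)/(3*(c:ℚ)+4)) + (b:ℚ) + 1
        = (2*(b:ℚ)*(c:ℚ) + 3*(b:ℚ) + 3*(c:ℚ) + 4)/(3*(c:ℚ)+4) from by field_simp; ring]
    positivity
  have hinner : cf (List.replicate b (-2:ℚ) ++ (-4:ℚ) :: List.replicate c (-2:ℚ))
      = -(P/Q) := by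
    rw [H1, ht, div_eq_iff hbd, hPdef, hQdef]
    field_simp
    ring
  have hLHS : cf ((a : ℚ) :: (List.replicate b (-2 : ℚ) ++ (-4 : ℚ) :: List.replicate c (-2 : ℚ)))
      = Q / ((a:ℚ) * Q + P) := by
    show ((a:ℚ) - cf (List.replicate b (-2:ℚ) ++ (-4:ℚ) :: List.replicate c (-2:ℚ)))⁻¹ = _
    rw [hinner, show (a:ℚ) - -(P/Q) = ((a:ℚ)*Q + P)/Q from by
      rw [hQdef, hPdef]; field_simp; ring, inv_div]
  -- RHS
  have k2 : cf [(-2:ℚ), (c:ℚ)+1] = -(((c:ℚ)+1)/(2*(c:ℚ)+3)) := by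
    show ((-2:ℚ) - ((c:ℚ)+1 - cf [])⁻¹)⁻¹ = _
    norm_num [cf]
    rw [show (-2:ℚ) - ((c:ℚ)+1)⁻¹ = -((2*(c:ℚ)+3)/((c:ℚ)+1)) from by field_simp; ring,
      inv_neg, inv_div]
  have k3 : cf [(b:ℚ)+1, -2, (c:ℚ)+1] = (2*(c:ℚ)+3)/Q := by
    show ((b:ℚ)+1 - cf [(-2:ℚ), (c:ℚ)+1])⁻¹ = _
    rw [k2, show (b:ℚ)+1 - -(((c:ℚ)+1)/(2*(c:ℚ)+3)) = Q/(2*(c:ℚ)+3) from by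
      rw [hQdef]; field_simp; ring, inv_div]
  have hRHS : cf [(a : ℚ) + 1, (b : ℚ) + 1, -2, (c : ℚ) + 1] = Q / ((a:ℚ)*Q + P) := by
    show ((a:ℚ)+1 - cf [(b:ℚ)+1, -2, (c:ℚ)+1])⁻¹ = _
    rw [k3, show (a:ℚ)+1 - (2*(c:ℚ)+3)/Q = ((a:ℚ)*Q + P)/Q from by
      rw [hQdef, hPdef]; field_simp; ring, inv_div]
  rw [hLHS, hRHS]
end

section
/- Let a be an even integer with a ≥ 4, and let b, c ≥ 1 be integers of opposite parity (b + c odd). Then the continued fraction value [a, 2, …, 2, 4, 2, …, 2] (with b copies of 2 before the entry 4 and c copies of 2 after it) equals [2m+1, 2n, 2, 2l−1] for some integers m ≥ 1, n ≤ −1, l ≤ −1, or equals [2m+1, 2n−1, 2, 2l] for some integers m ≥ 1, n ≤ −1, l ≤ −1. -/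
lemma cf_rep_s6 (c : ℕ) : cf (List.replicate c 2) = c / (c + 1) := by
  induction c with
  | zero => simp [cf]
  | succ n ih =>
    rw [List.replicate_succ, cf, ih]
    have h1 : ((n:ℚ)+1) ≠ 0 := by positivity
    have h2 : ((n:ℚ)+2) ≠ 0 := by positivity
    push_cast
    rw [inv_eq_iff_eq_inv]
    field_simp
    ring

lemma cf_mid (b c : ℕ) : cf (List.replicate b 2 ++ (4:ℚ) :: List.replicate c 2) =
    (2*b*c + 3*b + c + 1) / (2*b*c + 3*b + 3*c + 4) := by
  induction b with
  | zero =>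
    simp only [List.replicate_zero, List.nil_append, cf, cf_rep_s6]
    have h1 : ((c:ℚ)+1) ≠ 0 := by positivity
    have h2 : (3*(c:ℚ)+4) ≠ 0 := by positivity
    push_cast
    rw [inv_eq_iff_eq_inv]
    field_simp
    ring
  | succ n ih =>
    rw [List.replicate_succ, List.cons_append, cf, ih]
    have h1 : (2*(n:ℚ)*c + 3*n + 3*c + 4) ≠ 0 := by positivity
    have h2 : (2*((n:ℚ)+1)*c + 3*(n+1) + 3*c + 4) ≠ 0 := by positivity
    push_cast
    rw [inv_eq_iff_eq_inv]
    field_simp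
    ring

lemma cf4 (p q r : ℚ) (hp : 0 < p) (hq : q < 0) (hr : r < 0) :
    cf [p, q, 2, r] = (q*(2*r-1) - r) / (p*(q*(2*r-1) - r) - (2*r-1)) := by
  have h1 : r ≠ 0 := hr.ne
  have h2 : (0:ℚ) < 2 - r⁻¹ := by
    have : r⁻¹ ≤ 0 := inv_nonpos.mpr hr.le
    linarith
  have h3 : q - (2 - r⁻¹)⁻¹ < 0 := by
    have : 0 < (2 - r⁻¹)⁻¹ := inv_pos.mpr h2
    linarith
  have h4 : 0 < p - (q - (2 - r⁻¹)⁻¹)⁻¹ := by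
    have : (q - (2 - r⁻¹)⁻¹)⁻¹ < 0 := inv_lt_zero.mpr h3
    linarith
  have h5 : 0 < q*(2*r-1) - r := by nlinarith
  have h6 : 0 < p*(q*(2*r-1) - r) - (2*r-1) := by nlinarith
  simp only [cf, sub_zero]
  have e1 : (2 - r⁻¹) = (2*r-1)/r := by field_simp
  have h7 : (2*r-1) ≠ 0 := by linarith
  have e2 : q - ((2*r-1)/r)⁻¹ = (q*(2*r-1) - r)/(2*r-1) := by
    rw [inv_div]
    rw [sub_div, mul_div_assoc, div_self h7, mul_one]
  rw [e1, e2, inv_div, inv_eq_iff_eq_inv, inv_div, eq_div_iff h5.ne']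
  field_simp
  have h8 : (2*r-1)*q - r ≠ 0 := by rw [mul_comm]; exact h5.ne'
  rw [mul_sub, mul_div_cancel₀ _ h8]
  ring


set_option maxHeartbeats 1000000 in
theorem stmt_6 (a : ℤ) (ha : 4 ≤ a) (hae : Even a) (b c : ℕ)
    (hb : 1 ≤ b) (hc : 1 ≤ c) (hbc : Odd (b + c)) :
    (∃ m n l : ℤ, 1 ≤ m ∧ n ≤ -1 ∧ l ≤ -1 ∧
      cf ((a : ℚ) :: (List.replicate b (2 : ℚ) ++ (4 : ℚ) :: List.replicate c (2 : ℚ))) =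
        cf [2 * (m : ℚ) + 1, 2 * (n : ℚ), 2, 2 * (l : ℚ) - 1]) ∨
    (∃ m n l : ℤ, 1 ≤ m ∧ n ≤ -1 ∧ l ≤ -1 ∧
      cf ((a : ℚ) :: (List.replicate b (2 : ℚ) ++ (4 : ℚ) :: List.replicate c (2 : ℚ))) =
        cf [2 * (m : ℚ) + 1, 2 * (n : ℚ) - 1, 2, 2 * (l : ℚ)]) := by
  obtain ⟨t, ht⟩ := hae
  have ht2 : 2 ≤ t := by omega
  have haq : (a:ℚ) = 2*t := by rw [ht]; push_cast; ring
  have haq4 : (4:ℚ) ≤ (a:ℚ) := by exact_mod_cast ha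
  have hD : (0:ℚ) < 2*b*c + 3*b + 3*c + 4 := by positivity
  have hNum_lt : (2*(b:ℚ)*c + 3*b + c + 1) < 2*b*c + 3*b + 3*c + 4 := by
    have : (0:ℚ) ≤ (c:ℚ) := by positivity
    linarith
  have hden : (0:ℚ) < (a:ℚ)*(2*b*c + 3*b + 3*c + 4) - (2*b*c + 3*b + c + 1) := by
    nlinarith
  have key : cf ((a : ℚ) :: (List.replicate b (2 : ℚ) ++ (4 : ℚ) :: List.replicate c (2 : ℚ)))
      = (2*b*c + 3*b + 3*c + 4) / ((a:ℚ)*(2*b*c + 3*b + 3*c + 4) - (2*b*c + 3*b + c + 1)) := by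
    rw [cf, cf_mid, inv_eq_iff_eq_inv, inv_div]
    field_simp
  rcases Nat.even_or_odd c with hce | hco
  · -- c even, so b odd
    obtain ⟨k, hk⟩ := hce
    have hk1 : 1 ≤ k := by omega
    have hbc' := Nat.odd_iff.mp hbc
    obtain ⟨j, hj⟩ : ∃ j, b = 2*j+1 := ⟨b/2, by omega⟩
    left
    refine ⟨t - 1, -(j+1), -k, by omega, by omega, by omega, ?_⟩
    rw [key, cf4]
    · have hbq : (b:ℚ) = 2*j+1 := by rw [hj]; push_cast; ring
      have hcq : (c:ℚ) = 2*k := by rw [hk]; push_cast; ring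
      have htq : (2:ℚ) ≤ (t:ℚ) := by exact_mod_cast ht2
      have hjq : (0:ℚ) ≤ (j:ℚ) := by positivity
      have hkq : (1:ℚ) ≤ (k:ℚ) := by exact_mod_cast hk1
      have hkq0 : (0:ℚ) ≤ (k:ℚ) := by positivity
      have htq0 : (0:ℚ) ≤ (t:ℚ) := by linarith
      have hD2 : (0:ℚ) < 2*(2*(j:ℚ)+1)*(2*(k:ℚ)) + 3*(2*(j:ℚ)+1) + 3*(2*(k:ℚ)) + 4 := by positivity
      push_cast
      rw [hbq, hcq, haq]
      rw [div_eq_div_iff (ne_of_gt (by nlinarith [mul_le_mul_of_nonneg_right htq hD2.le, mul_nonneg hjq hkq0]))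
        (ne_of_gt (by nlinarith [mul_pos (show (0:ℚ) < 2*(t:ℚ)-1 by linarith) hD2, mul_nonneg hjq hkq0]))]
      ring
    · push_cast; have : (2:ℚ) ≤ t := by exact_mod_cast ht2
      linarith
    · push_cast; have : (0:ℚ) ≤ (j:ℚ) := by positivity
      linarith
    · push_cast; have : (1:ℚ) ≤ (k:ℚ) := by exact_mod_cast hk1
      linarith
  · -- c odd, so b even
    obtain ⟨k, hk⟩ := hco
    have hbc' := Nat.odd_iff.mp hbc
    obtain ⟨j, hj⟩ : ∃ j, b = 2*j := ⟨b/2, by omega⟩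
    have hj1 : 1 ≤ j := by omega
    right
    refine ⟨t - 1, -j, -(k+1), by omega, by omega, by omega, ?_⟩
    rw [key, cf4]
    · have hbq : (b:ℚ) = 2*j := by rw [hj]; push_cast; ring
      have hcq : (c:ℚ) = 2*k+1 := by rw [hk]; push_cast; ring
      have htq : (2:ℚ) ≤ (t:ℚ) := by exact_mod_cast ht2
      have hjq : (1:ℚ) ≤ (j:ℚ) := by exact_mod_cast hj1
      have hkq : (0:ℚ) ≤ (k:ℚ) := by positivity
      have hjq0 : (0:ℚ) ≤ (j:ℚ) := by positivity
      have htq0 : (0:ℚ) ≤ (t:ℚ) := by linarith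
      have hD2 : (0:ℚ) < 2*(2*(j:ℚ))*(2*(k:ℚ)+1) + 3*(2*(j:ℚ)) + 3*(2*(k:ℚ)+1) + 4 := by positivity
      push_cast
      rw [hbq, hcq, haq]
      rw [div_eq_div_iff (ne_of_gt (by nlinarith [mul_le_mul_of_nonneg_right htq hD2.le, mul_nonneg hjq0 hkq]))
        (ne_of_gt (by nlinarith [mul_pos (show (0:ℚ) < 2*(t:ℚ)-1 by linarith) hD2, mul_nonneg hjq0 hkq]))]
      ring
    · push_cast; have : (2:ℚ) ≤ t := by exact_mod_cast ht2
      linarith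
    · push_cast; have : (1:ℚ) ≤ (j:ℚ) := by exact_mod_cast hj1
      linarith
    · push_cast; have : (0:ℚ) ≤ (k:ℚ) := by positivity
      linarith
end

section
/- Let a and b be nonzero integers with |b| ≥ 2, and let c ≥ 1 be an integer. Then [a, b, 2, …, 2] (with c copies of 2 after the entry b) = [a, b − 1, −(c+1)]. -/
lemma cf_replicate_two (c : ℕ) : cf (List.replicate c (2 : ℚ)) = c / (c + 1) := by
  induction c with
  | zero => simp [cf]
  | succ n ih =>
    rw [List.replicate_succ, cf, ih]
    have h : ((n : ℚ) + 1) ≠ 0 := by positivity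
    have key : (2 : ℚ) - (n : ℚ) / ((n : ℚ) + 1) = ((n : ℚ) + 2) / ((n : ℚ) + 1) := by
      field_simp; ring
    rw [key, inv_div]
    push_cast
    ring

theorem stmt_11 (a b : ℤ) (ha : a ≠ 0) (hb : b ≠ 0) (hb2 : 2 ≤ |b|)
    (c : ℕ) (hc : 1 ≤ c) :
    cf ((a : ℚ) :: (b : ℚ) :: List.replicate c (2 : ℚ)) =
      cf [(a : ℚ), (b : ℚ) - 1, -((c : ℚ) + 1)] := by
  have h : ((c : ℚ) + 1) ≠ 0 := by positivity
  have h2 : -((c : ℚ) + 1) ≠ 0 := neg_ne_zero.mpr h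
  simp only [cf, sub_zero, cf_replicate_two]
  congr 2
  rw [inv_neg]
  field_simp
  ring
end

section
/- Let a and b be nonzero integers with |b| ≥ 2, and let c ≥ 1 be an integer. Then [a, b, −2, …, −2] (with c copies of −2 after the entry b) = [a, b + 1, c + 1]. -/
lemma cf_replicate (c : ℕ) : cf (List.replicate c (-2 : ℚ)) = -(c : ℚ) / (c + 1) := by
  induction c with
  | zero => simp [cf]
  | succ n ih =>
    rw [List.replicate_succ, cf, ih]
    have h1 : (n : ℚ) + 1 ≠ 0 := by positivity
    have h2 : (n : ℚ) + 2 ≠ 0 := by positivity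
    push_cast
    rw [show (-2 - -(n:ℚ)/(n+1)) = -(((n:ℚ)+2)/(n+1)) by field_simp; try ring,
      inv_neg, inv_div]
    ring

theorem stmt_12 (a b : ℤ) (ha : a ≠ 0) (hb : b ≠ 0) (hb2 : 2 ≤ |b|)
    (c : ℕ) (hc : 1 ≤ c) :
    cf ((a : ℚ) :: (b : ℚ) :: List.replicate c (-2 : ℚ)) =
      cf [(a : ℚ), (b : ℚ) + 1, (c : ℚ) + 1] := by
  have h1 : (c : ℚ) + 1 ≠ 0 := by positivity
  have hden : (b : ℚ) * (c + 1) + c ≠ 0 := by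
    rcases abs_cases b with ⟨h, _⟩ | ⟨h, _⟩
    · have hb' : (2 : ℤ) ≤ b := by omega
      have : (2 : ℚ) ≤ (b : ℚ) := by exact_mod_cast hb'
      have hc0 : (0 : ℚ) ≤ (c : ℚ) := by positivity
      nlinarith
    · have hb' : b ≤ -2 := by omega
      have : (b : ℚ) ≤ -2 := by exact_mod_cast hb'
      have hc0 : (0 : ℚ) ≤ (c : ℚ) := by positivity
      nlinarith
  rw [cf, cf, cf_replicate]
  simp only [cf]
  congr 1
  congr 1
  rw [sub_zero]
  rw [show (b : ℚ) - -(c : ℚ) / (c + 1) = ((b : ℚ) * (c + 1) + c) / (c + 1) by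
    field_simp; try ring,
    show (b : ℚ) + 1 - ((c : ℚ) + 1)⁻¹ = ((b : ℚ) * (c + 1) + c) / (c + 1) by
    field_simp; try ring]
end

section
/- Let a be a nonzero integer and let b, c ≥ 1 be integers. Then [a, −2, …, −2, 2, …, 2] (with b copies of −2 followed by c copies of 2 after the entry a) = [a + 1, b + 1, 2, −c]. -/
lemma cf_rep_two (c : ℕ) : cf (List.replicate c (2 : ℚ)) = (c : ℚ) / (c + 1) := by
  induction c with
  | zero => simp [cf]
  | succ c ih =>
      have h : (c : ℚ) + 1 ≠ 0 := by positivity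
      rw [List.replicate_succ, cf, ih]
      push_cast
      rw [inv_eq_iff_eq_inv, inv_div]
      field_simp
      ring

lemma cf_main (b c : ℕ) :
    cf (List.replicate b (-2 : ℚ) ++ List.replicate c (2 : ℚ)) =
      ((c : ℚ) - b - 2 * b * c) / (2 * b * c + b + c + 1) := by
  induction b with
  | zero =>
      simp [cf_rep_two]
  | succ b ih =>
      have hD : (2 * (b : ℚ) * c + b + c + 1) ≠ 0 := by positivity
      have hnum : ((c : ℚ) - (b + 1) - 2 * (b + 1) * c) ≠ 0 := by
        have : ((c : ℚ) - (b + 1) - 2 * (b + 1) * c) = -(2 * b * c + b + c + 1) := by ring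
        rw [this, neg_ne_zero]
        exact hD
      rw [List.replicate_succ, List.cons_append, cf, ih]
      push_cast
      rw [inv_eq_iff_eq_inv, inv_div]
      have hnum' : (c:ℚ) - (b + 1) - 2 * c * (b + 1) ≠ 0 := by
        intro h; apply hnum; linear_combination h
      field_simp
      ring

theorem stmt_14 (a : ℤ) (ha : a ≠ 0) (b c : ℕ) (hb : 1 ≤ b) (hc : 1 ≤ c) :
    cf ((a : ℚ) :: (List.replicate b (-2 : ℚ) ++ List.replicate c (2 : ℚ))) =
      cf [(a : ℚ) + 1, (b : ℚ) + 1, 2, -(c : ℚ)] := by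
  have hc' : (0 : ℚ) < c := by exact_mod_cast hc
  have hc0 : (c : ℚ) ≠ 0 := hc'.ne'
  have hD : (2 * (b : ℚ) * c + b + c + 1) ≠ 0 := by positivity
  have h2c : (2 * (c : ℚ) + 1) ≠ 0 := by positivity
  have e1 : cf [-(c : ℚ)] = -(1 / c) := by
    rw [cf]
    show (-(c : ℚ) - cf [])⁻¹ = _
    rw [show cf [] = 0 from rfl]
    field_simp
    rw [sub_zero, div_neg, div_self hc0]
  have e2 : cf [2, -(c : ℚ)] = c / (2 * c + 1) := by
    rw [cf, e1, inv_eq_iff_eq_inv, inv_div]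
    field_simp
    ring
  have e3 : cf [(b : ℚ) + 1, 2, -(c : ℚ)] = (2 * c + 1) / (2 * b * c + b + c + 1) := by
    rw [cf, e2, inv_eq_iff_eq_inv, inv_div]
    field_simp
    ring
  rw [cf, cf_main, show cf [(a : ℚ) + 1, (b : ℚ) + 1, 2, -(c : ℚ)] =
      ((a : ℚ) + 1 - cf [(b : ℚ) + 1, 2, -(c : ℚ)])⁻¹ from rfl, e3]
  congr 1
  field_simp
  ring
end

section
/- Let k ≥ 3 and let b_1, …, b_k be nonzero even integers such that the index 1 is a channel index and the sequence has at most two channel indices in total. Then at least one of the following holds: (i) b_2 = ⋯ = b_k = 2, or b_2 = ⋯ = b_k = −2; (ii) k = 3, |b_2| ≥ 4 and |b_3| ≥ 4; (iii) |b_2| ≥ 4 and either b_3 = ⋯ = b_k = 2 or b_3 = ⋯ = b_k = −2; (iv) |b_k| ≥ 4 and either b_2 = ⋯ = b_{k−1} = 2 or b_2 = ⋯ = b_{k−1} = −2; (v) there exists j with 2 ≤ j ≤ k − 1 such that either b_2 = ⋯ = b_j = 2 and b_{j+1} = ⋯ = b_k = −2, or b_2 = ⋯ = b_j = −2 and b_{j+1}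 = ⋯ = b_k = 2. -/
/-- `i` is a channel index for the (1-indexed) sequence `b` if
`b i * b (i+1) < 0` or `b i * b (i+1) > 4`. -/
def ChannelIndex (b : ℕ → ℤ) (i : ℕ) : Prop :=
  b i * b (i + 1) < 0 ∨ 4 < b i * b (i + 1)

instance (b : ℕ → ℤ) (i : ℕ) : Decidable (ChannelIndex b i) := by
  unfold ChannelIndex; infer_instance

lemma nonch_pair {x y : ℤ} (hx : x ≠ 0) (hex : Even x) (hy : y ≠ 0) (hey : Even y)
    (h : ¬ (x * y < 0 ∨ 4 < x * y)) : (x = 2 ∧ y = 2) ∨ (x = -2 ∧ y = -2) := by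
  push_neg at h
  obtain ⟨h1, h2⟩ := h
  obtain ⟨m, hm⟩ := hex
  obtain ⟨n, hn⟩ := hey
  subst hm; subst hn
  have hm0 : m ≠ 0 := by omega
  have hn0 : n ≠ 0 := by omega
  have hr : (m + m) * (n + n) = 4 * (m * n) := by ring
  rw [hr] at h1 h2
  have hp0 : 0 ≤ m * n := by linarith
  have hp1 : m * n ≤ 1 := by linarith
  have hpne : m * n ≠ 0 := mul_ne_zero hm0 hn0
  have hp : m * n = 1 := by omega
  rcases (Int.mul_eq_one_iff_eq_one_or_neg_one.mp hp) with ⟨he1, he2⟩ | ⟨he1, he2⟩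
  · left; omega
  · right; omega

lemma even_abs_ge {x : ℤ} (hx : x ≠ 0) (hex : Even x) (h2 : x ≠ 2) (hn2 : x ≠ -2) :
    4 ≤ |x| := by
  obtain ⟨m, hm⟩ := hex
  rcases abs_cases x with ⟨h, _⟩ | ⟨h, _⟩ <;> omega

lemma const_seg (b : ℕ → ℤ) (a m : ℕ) (h : ∀ i, a ≤ i → i < m → b i = b (i + 1)) :
    ∀ i, a ≤ i → i ≤ m → b i = b a := by
  intro i hi
  induction i, hi using Nat.le_induction with
  | base => intro _; rfl
  | succ n hn ih =>
    intro hle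
    rw [← h n hn (by omega)]
    exact ih (by omega)

theorem stmt_15 (k : ℕ) (hk : 3 ≤ k) (b : ℕ → ℤ)
    (hb : ∀ i, 1 ≤ i → i ≤ k → b i ≠ 0 ∧ Even (b i))
    (hch1 : ChannelIndex b 1)
    (hch2 : ((Finset.Icc 1 (k - 1)).filter (fun i => ChannelIndex b i)).card ≤ 2) :
    ((∀ i, 2 ≤ i → i ≤ k → b i = 2) ∨ (∀ i, 2 ≤ i → i ≤ k → b i = -2)) ∨
    (k = 3 ∧ 4 ≤ |b 2| ∧ 4 ≤ |b 3|) ∨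
    (4 ≤ |b 2| ∧
      ((∀ i, 3 ≤ i → i ≤ k → b i = 2) ∨ (∀ i, 3 ≤ i → i ≤ k → b i = -2))) ∨
    (4 ≤ |b k| ∧
      ((∀ i, 2 ≤ i → i ≤ k - 1 → b i = 2) ∨ (∀ i, 2 ≤ i → i ≤ k - 1 → b i = -2))) ∨
    (∃ j, 2 ≤ j ∧ j ≤ k - 1 ∧
      (((∀ i, 2 ≤ i → i ≤ j → b i = 2) ∧ (∀ i, j + 1 ≤ i → i ≤ k → b i = -2)) ∨
       ((∀ i, 2 ≤ i → i ≤ j → b i = -2) ∧ (∀ i, j + 1 ≤ i → i ≤ k → b i = 2)))) := by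
  set S := (Finset.Icc 2 (k - 1)).filter (fun i => ChannelIndex b i) with hSdef
  have h1mem : (1 : ℕ) ∈ (Finset.Icc 1 (k - 1)).filter (fun i => ChannelIndex b i) := by
    simp only [Finset.mem_filter, Finset.mem_Icc]
    exact ⟨⟨le_refl 1, by omega⟩, hch1⟩
  have hsub : S ⊆ ((Finset.Icc 1 (k - 1)).filter (fun i => ChannelIndex b i)).erase 1 := by
    intro x hx
    simp only [hSdef, Finset.mem_filter, Finset.mem_Icc] at hx
    simp only [Finset.mem_erase, Finset.mem_filter, Finset.mem_Icc]
    exact ⟨by omega, ⟨by omega, by omega⟩, hx.2⟩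
  have hScard : S.card ≤ 1 := by
    have h1 := Finset.card_le_card hsub
    rw [Finset.card_erase_of_mem h1mem] at h1
    omega
  -- key consequence of non-channel indices
  have key : ∀ i, 2 ≤ i → i ≤ k - 1 → ¬ ChannelIndex b i →
      (b i = 2 ∧ b (i + 1) = 2) ∨ (b i = -2 ∧ b (i + 1) = -2) := by
    intro i h2 h3 hnc
    have hbi := hb i (by omega) (by omega)
    have hbi1 := hb (i + 1) (by omega) (by omega)
    exact nonch_pair hbi.1 hbi.2 hbi1.1 hbi1.2 hnc
  by_cases hS : S = ∅
  · -- no channel index in [2, k-1]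
    have hnc : ∀ i, 2 ≤ i → i ≤ k - 1 → ¬ ChannelIndex b i := by
      intro i h2 h3 hc
      have : i ∈ S := by
        simp only [hSdef, Finset.mem_filter, Finset.mem_Icc]
        exact ⟨⟨h2, h3⟩, hc⟩
      rw [hS] at this
      exact absurd this (Finset.notMem_empty i)
    have hstep : ∀ i, 2 ≤ i → i < k → b i = b (i + 1) := by
      intro i h2 h3
      rcases key i h2 (by omega) (hnc i h2 (by omega)) with ⟨ha, hb'⟩ | ⟨ha, hb'⟩ <;>
        rw [ha, hb']
    have hconst : ∀ i, 2 ≤ i → i ≤ k → b i = b 2 := const_seg b 2 k hstep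
    have h2v := key 2 le_rfl (by omega) (hnc 2 le_rfl (by omega))
    left
    rcases h2v with ⟨h2v, _⟩ | ⟨h2v, _⟩
    · left; intro i hi1 hi2; rw [hconst i hi1 hi2, h2v]
    · right; intro i hi1 hi2; rw [hconst i hi1 hi2, h2v]
  · obtain ⟨j, hj⟩ := Finset.nonempty_iff_ne_empty.mpr hS
    have hjm := hj
    simp only [hSdef, Finset.mem_filter, Finset.mem_Icc] at hjm
    obtain ⟨⟨hj2, hjk1⟩, hjch⟩ := hjm
    have honly : ∀ i, 2 ≤ i → i ≤ k - 1 → i ≠ j → ¬ ChannelIndex b i := by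
      intro i h2 h3 hne hch
      have hiS : i ∈ S := by
        simp only [hSdef, Finset.mem_filter, Finset.mem_Icc]
        exact ⟨⟨h2, h3⟩, hch⟩
      have : 1 < S.card := Finset.one_lt_card.mpr ⟨i, hiS, j, hj, hne⟩
      omega
    have hLstep : ∀ i, 2 ≤ i → i < j → b i = b (i + 1) := by
      intro i h2 h3
      rcases key i h2 (by omega) (honly i h2 (by omega) (by omega)) with ⟨ha, hb'⟩ | ⟨ha, hb'⟩ <;>
        rw [ha, hb']
    have hconstL : ∀ i, 2 ≤ i → i ≤ j → b i = b 2 := const_seg b 2 j hLstep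
    have hRstep : ∀ i, j + 1 ≤ i → i < k → b i = b (i + 1) := by
      intro i h2 h3
      rcases key i (by omega) (by omega) (honly i (by omega) (by omega) (by omega)) with
        ⟨ha, hb'⟩ | ⟨ha, hb'⟩ <;> rw [ha, hb']
    have hconstR : ∀ i, j + 1 ≤ i → i ≤ k → b i = b (j + 1) := const_seg b (j + 1) k hRstep
    have hA : 3 ≤ j → (b 2 = 2 ∨ b 2 = -2) := by
      intro h3
      rcases key 2 le_rfl (by omega) (honly 2 le_rfl (by omega) (by omega)) with ⟨ha, _⟩ | ⟨ha, _⟩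
      · exact Or.inl ha
      · exact Or.inr ha
    have hB : j + 1 ≤ k - 1 → (b (j + 1) = 2 ∨ b (j + 1) = -2) := by
      intro h3
      rcases key (j + 1) (by omega) h3 (honly (j + 1) (by omega) h3 (by omega)) with
        ⟨ha, _⟩ | ⟨ha, _⟩
      · exact Or.inl ha
      · exact Or.inr ha
    by_cases hb2 : b 2 = 2 ∨ b 2 = -2
    · by_cases hbj : b (j + 1) = 2 ∨ b (j + 1) = -2
      · -- case (v)
        have hbjv : b j = b 2 := hconstL j hj2 le_rfl
        right; right; right; right
        refine ⟨j, hj2, hjk1, ?_⟩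
        unfold ChannelIndex at hjch
        rcases hb2 with h2 | h2 <;> rcases hbj with hj' | hj'
        · exfalso; rw [hbjv, h2, hj'] at hjch; omega
        · left
          exact ⟨fun i a c => by rw [hconstL i a c, h2],
                 fun i a c => by rw [hconstR i a c, hj']⟩
        · right
          exact ⟨fun i a c => by rw [hconstL i a c, h2],
                 fun i a c => by rw [hconstR i a c, hj']⟩
        · exfalso; rw [hbjv, h2, hj'] at hjch; omega
      · -- |b (j+1)| ≥ 4, so j = k - 1 : case (iv)
        have hjk : j = k - 1 := by
          by_contra h
          exact hbj (hB (by omega))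
        push_neg at hbj
        have hbjk := hb (j + 1) (by omega) (by omega)
        have habs : 4 ≤ |b (j + 1)| := even_abs_ge hbjk.1 hbjk.2 hbj.1 hbj.2
        have hjk' : j + 1 = k := by omega
        right; right; right; left
        constructor
        · rw [← hjk']; exact habs
        · rcases hb2 with h2 | h2
          · left; intro i hi1 hi2; rw [hconstL i hi1 (by omega), h2]
          · right; intro i hi1 hi2; rw [hconstL i hi1 (by omega), h2]
    · by_cases hbj : b (j + 1) = 2 ∨ b (j + 1) = -2
      · -- |b 2| ≥ 4, so j = 2 : case (iii)
        have hj2' : j = 2 := by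
          by_contra h
          exact hb2 (hA (by omega))
        push_neg at hb2
        have hb2k := hb 2 (by omega) (by omega)
        have habs : 4 ≤ |b 2| := even_abs_ge hb2k.1 hb2k.2 hb2.1 hb2.2
        right; right; left
        refine ⟨habs, ?_⟩
        rcases hbj with h2 | h2
        · left; intro i hi1 hi2; rw [hconstR i (by omega) hi2, h2]
        · right; intro i hi1 hi2; rw [hconstR i (by omega) hi2, h2]
      · -- both big : j = 2 and j = k - 1, so k = 3 : case (ii)
        have hj2' : j = 2 := by
          by_contra h
          exact hb2 (hA (by omega))
        have hjk : j = k - 1 := by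
          by_contra h
          exact hbj (hB (by omega))
        have hk3 : k = 3 := by omega
        push_neg at hb2
        push_neg at hbj
        have hb2k := hb 2 (by omega) (by omega)
        have hbjk := hb (j + 1) (by omega) (by omega)
        have habs2 : 4 ≤ |b 2| := even_abs_ge hb2k.1 hb2k.2 hb2.1 hb2.2
        have habsj : 4 ≤ |b (j + 1)| := even_abs_ge hbjk.1 hbjk.2 hbj.1 hbj.2
        have h3 : j + 1 = 3 := by omega
        rw [h3] at habsj
        right; left
        exact ⟨hk3, habs2, habsj⟩
end

section
/- Let k ≥ 3 be an odd integer and let b_1, …, b_k be nonzero even integers with at most two channel indices, and assume that either b_1 ≥ 4, or b_1 = 2 and b_2 ≤ −2. Then the continued fraction value v = [b_1, …, b_k] can be written in at least one of the following forms, for suitable integers m, n, l: (0) v = [2m+1, 2n−1] with m ≥ 1 and n ∉ {0, 1}; (1) v = [2m, 2n, 2l] with m ≥ 1, |n| ≥ 2, |l| ≥ 2, and moreover n ≤ −2 if m = 1; (2) v = [2m, 2n−1, −2l] with m ≥ 1, |n| ≥ 2, l ≥ 1, and moreover n ≤ −2 if m = 1; (3) v = [2m, 2n+1, 2l] with m ≥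 1, |n| ≥ 2, l ≥ 1, and moreover n ≤ −2 if m = 1; (4) v = [2m+1, 2n, 2l−1] with m ≥ 1, n ≠ 0, l ∉ {0, 1}; (5) v = [2m+1, 2n, −2, 2l−1] with m ≥ 1, n ≤ −1, l ≥ 2; (6) v = [2m+1, 2n−1, −2, 2l] with m ≥ 1, n ≤ −1, l ≥ 1; (7) v = [2m+1, 2n, 2, 2l−1] with m ≥ 1, n ≥ 1, l ≤ −1; (8) v = [2m+1, 2n−1, 2, 2l] with m ≥ 1, n ≥ 2, l ≤ −1. -/
set_option maxHeartbeats 4000000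

lemma cf_nil : cf [] = 0 := rfl

lemma cf_cons (a : ℚ) (t : List ℚ) : cf (a :: t) = (a - cf t)⁻¹ := rfl

lemma cf1 (x : ℚ) : cf [x] = 1 / x := by
  rw [cf_cons, cf_nil, sub_zero, inv_eq_one_div]

lemma cf2 (x y : ℚ) (hy : y ≠ 0) : cf [x, y] = y / (x * y - 1) := by
  rw [cf_cons, cf1]
  rw [show x - 1 / y = (x * y - 1) / y from by field_simp, inv_div]

lemma cf3 (x y z : ℚ) (hz : z ≠ 0) (h1 : y * z - 1 ≠ 0) :
    cf [x, y, z] = (y * z - 1) / (x * (y * z - 1) - z) := by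
  rw [cf_cons, cf2 _ _ hz]
  rw [show x - z / (y * z - 1) = (x * (y * z - 1) - z) / (y * z - 1) from by
    rw [eq_div_iff h1, sub_mul, div_mul_cancel₀ _ h1], inv_div]

lemma cf4_s16 (x y z w : ℚ) (hw : w ≠ 0) (h1 : z * w - 1 ≠ 0)
    (h2 : y * (z * w - 1) - w ≠ 0) :
    cf [x, y, z, w] =
      (y * (z * w - 1) - w) / (x * (y * (z * w - 1) - w) - (z * w - 1)) := by
  rw [cf_cons, cf3 _ _ _ hw h1]
  rw [show x - (z * w - 1) / (y * (z * w - 1) - w) =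
      (x * (y * (z * w - 1) - w) - (z * w - 1)) / (y * (z * w - 1) - w) from by
    rw [eq_div_iff h2, sub_mul, div_mul_cancel₀ _ h2], inv_div]

/-- tail continued fraction of `b` from position `i` to `k` -/
def tcf (b : ℕ → ℤ) (k i : ℕ) : ℚ :=
  cf ((List.range (k + 1 - i)).map fun p => ((b (i + p) : ℤ) : ℚ))

lemma tcf_top (b : ℕ → ℤ) (k : ℕ) : tcf b k (k + 1) = 0 := by
  unfold tcf
  rw [Nat.sub_self]
  simp [cf_nil]

lemma tcf_cons (b : ℕ → ℤ) (k i : ℕ) (h : i ≤ k) :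
    tcf b k i = ((b i : ℚ) - tcf b k (i + 1))⁻¹ := by
  unfold tcf
  rw [show k + 1 - i = (k - i) + 1 by omega, show k + 1 - (i + 1) = k - i by omega,
    List.range_succ_eq_map, List.map_cons, List.map_map, cf_cons]
  have hfun : ((fun p => ((b (i + p) : ℤ) : ℚ)) ∘ Nat.succ) =
      fun p => ((b (i + 1 + p) : ℤ) : ℚ) := by
    funext p
    simp only [Function.comp_apply]
    congr 2
    omega
  rw [hfun]
  norm_num

lemma run_pos (b : ℕ → ℤ) (k : ℕ) :
    ∀ a i : ℕ, i + a ≤ k + 1 →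
      (∀ p, i ≤ p → p < i + a → b p = 2) →
      |tcf b k (i + a)| < 1 →
      tcf b k i * ((1 + (a : ℚ)) - (a : ℚ) * tcf b k (i + a)) =
          (1 - (a : ℚ)) * tcf b k (i + a) + (a : ℚ)
        ∧ 0 < (1 + (a : ℚ)) - (a : ℚ) * tcf b k (i + a)
        ∧ |tcf b k i| < 1 := by
  intro a
  induction a with
  | zero =>
    intro i _ _ hw
    norm_num
    exact hw
  | succ a ih =>
    intro i hik hc hw
    have he : i + (a + 1) = (i + 1) + a := by omega
    rw [he] at hw ⊢
    obtain ⟨ih1, ih2, ih3⟩ := ih (i + 1) (by omega)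
      (fun p hp1 hp2 => hc p (by omega) (by omega)) hw
    have hbi : b i = 2 := hc i (by omega) (by omega)
    have hcons : tcf b k i = ((2 : ℚ) - tcf b k (i + 1))⁻¹ := by
      rw [tcf_cons b k i (by omega), hbi]
      norm_num
    obtain ⟨hu1, hu2⟩ := abs_lt.mp ih3
    obtain ⟨hw1, hw2⟩ := abs_lt.mp hw
    have h2u0 : (2 : ℚ) - tcf b k (i + 1) ≠ 0 := by
      intro h; nlinarith
    refine ⟨?_, ?_, ?_⟩
    · rw [hcons]
      push_cast
      rw [inv_mul_eq_div, div_eq_iff h2u0]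
      linear_combination ih1
    · push_cast
      have ha0 : (0 : ℚ) ≤ (a : ℚ) := by positivity
      nlinarith
    · rw [hcons, abs_inv]
      have h1 : (1 : ℚ) < |2 - tcf b k (i + 1)| := by
        rw [abs_of_pos (by linarith)]
        linarith
      rw [inv_lt_one_iff₀]
      right
      exact h1

lemma run_neg (b : ℕ → ℤ) (k : ℕ) :
    ∀ a i : ℕ, i + a ≤ k + 1 →
      (∀ p, i ≤ p → p < i + a → b p = -2) →
      |tcf b k (i + a)| < 1 →
      tcf b k i * ((1 + (a : ℚ)) + (a : ℚ) * tcf b k (i + a)) =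
          (1 - (a : ℚ)) * tcf b k (i + a) - (a : ℚ)
        ∧ 0 < (1 + (a : ℚ)) + (a : ℚ) * tcf b k (i + a)
        ∧ |tcf b k i| < 1 := by
  intro a
  induction a with
  | zero =>
    intro i _ _ hw
    norm_num
    exact hw
  | succ a ih =>
    intro i hik hc hw
    have he : i + (a + 1) = (i + 1) + a := by omega
    rw [he] at hw ⊢
    obtain ⟨ih1, ih2, ih3⟩ := ih (i + 1) (by omega)
      (fun p hp1 hp2 => hc p (by omega) (by omega)) hw
    have hbi : b i = -2 := hc i (by omega) (by omega)
    have hcons : tcf b k i = ((-2 : ℚ) - tcf b k (i + 1))⁻¹ := by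
      rw [tcf_cons b k i (by omega), hbi]
      norm_num
    obtain ⟨hu1, hu2⟩ := abs_lt.mp ih3
    obtain ⟨hw1, hw2⟩ := abs_lt.mp hw
    have h2u0 : (-2 : ℚ) - tcf b k (i + 1) ≠ 0 := by
      intro h; nlinarith
    refine ⟨?_, ?_, ?_⟩
    · rw [hcons]
      push_cast
      rw [inv_mul_eq_div, div_eq_iff h2u0]
      linear_combination -ih1
    · push_cast
      have ha0 : (0 : ℚ) ≤ (a : ℚ) := by positivity
      nlinarith
    · rw [hcons, abs_inv]
      have h1 : (1 : ℚ) < |-2 - tcf b k (i + 1)| := by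
        rw [abs_of_neg (by linarith)]
        linarith
      rw [inv_lt_one_iff₀]
      right
      exact h1

lemma const_chain (f : ℕ → ℤ) (l r : ℕ) (h : ∀ i, l ≤ i → i < r → f (i + 1) = f i) :
    ∀ p, l ≤ p → p ≤ r → f p = f l := by
  intro p
  induction p with
  | zero =>
    intro h1 _
    have : l = 0 := by omega
    rw [this]
  | succ q ih =>
    intro h1 h2
    rcases Nat.eq_or_lt_of_le h1 with h3 | h3
    · rw [← h3]
    · rw [h (q) (by omega) (by omega)]
      exact ih (by omega) (by omega)

lemma sub_div_eq (x n d : ℚ) (hd : d ≠ 0) : x - n / d = (x * d - n) / d := by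
  field_simp

def Goal (v : ℚ) : Prop :=
    (∃ m n : ℤ, 1 ≤ m ∧ n ≠ 0 ∧ n ≠ 1 ∧
      v = cf [2 * (m : ℚ) + 1, 2 * (n : ℚ) - 1]) ∨
    (∃ m n l : ℤ, 1 ≤ m ∧ 2 ≤ |n| ∧ 2 ≤ |l| ∧ (m = 1 → n ≤ -2) ∧
      v = cf [2 * (m : ℚ), 2 * (n : ℚ), 2 * (l : ℚ)]) ∨
    (∃ m n l : ℤ, 1 ≤ m ∧ 2 ≤ |n| ∧ 1 ≤ l ∧ (m = 1 → n ≤ -2) ∧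
      v = cf [2 * (m : ℚ), 2 * (n : ℚ) - 1, -(2 * (l : ℚ))]) ∨
    (∃ m n l : ℤ, 1 ≤ m ∧ 2 ≤ |n| ∧ 1 ≤ l ∧ (m = 1 → n ≤ -2) ∧
      v = cf [2 * (m : ℚ), 2 * (n : ℚ) + 1, 2 * (l : ℚ)]) ∨
    (∃ m n l : ℤ, 1 ≤ m ∧ n ≠ 0 ∧ l ≠ 0 ∧ l ≠ 1 ∧
      v = cf [2 * (m : ℚ) + 1, 2 * (n : ℚ), 2 * (l : ℚ) - 1]) ∨
    (∃ m n l : ℤ, 1 ≤ m ∧ n ≤ -1 ∧ 2 ≤ l ∧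
      v = cf [2 * (m : ℚ) + 1, 2 * (n : ℚ), -2, 2 * (l : ℚ) - 1]) ∨
    (∃ m n l : ℤ, 1 ≤ m ∧ n ≤ -1 ∧ 1 ≤ l ∧
      v = cf [2 * (m : ℚ) + 1, 2 * (n : ℚ) - 1, -2, 2 * (l : ℚ)]) ∨
    (∃ m n l : ℤ, 1 ≤ m ∧ 1 ≤ n ∧ l ≤ -1 ∧
      v = cf [2 * (m : ℚ) + 1, 2 * (n : ℚ), 2, 2 * (l : ℚ) - 1]) ∨
    (∃ m n l : ℤ, 1 ≤ m ∧ 2 ≤ n ∧ l ≤ -1 ∧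
      v = cf [2 * (m : ℚ) + 1, 2 * (n : ℚ) - 1, 2, 2 * (l : ℚ)])

lemma leafA (b : ℕ → ℤ) (k : ℕ) (hk : 3 ≤ k) (hkodd : Odd k)
    (ε : ℤ) (hε : ε = 1 ∨ ε = -1)
    (hc : ∀ p, 2 ≤ p → p ≤ k → b p = 2 * ε)
    (m : ℤ) (hm : b 1 = 2 * m)
    (hinit : 4 ≤ b 1 ∨ (b 1 = 2 ∧ b 2 ≤ -2))
    (v : ℚ) (hv : v = tcf b k 1) : Goal v := by
  obtain ⟨w, hw⟩ := hkodd
  have hqex : ∃ q, k - 1 = 2 * q ∧ 1 ≤ q := ⟨(k - 1) / 2, by omega, by omega⟩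
  obtain ⟨q, hq1, hq2⟩ := hqex
  have hm1 : 1 ≤ m := by rcases hinit with h | ⟨h, _⟩ <;> omega
  have htop : |tcf b k (2 + (k - 1))| < 1 := by
    rw [show 2 + (k - 1) = k + 1 by omega, tcf_top]; norm_num
  have hvc : v = (2 * (m : ℚ) - tcf b k 2)⁻¹ := by
    rw [hv, tcf_cons b k 1 (by omega), hm]; push_cast; ring_nf
  have hr : ((k - 1 : ℕ) : ℚ) = 2 * (q : ℚ) := by rw [hq1]; push_cast; ring
  have hden : (0 : ℚ) < 1 + 2 * (q : ℚ) := by positivity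
  have hq0 : (1 : ℚ) ≤ (q : ℚ) := by exact_mod_cast hq2
  have hm1' : (1 : ℚ) ≤ (m : ℚ) := by exact_mod_cast hm1
  rcases hε with rfl | rfl
  · -- ε = 1
    have hb2 : b 2 = 2 := by have := hc 2 (by omega) (by omega); omega
    have hm2 : 2 ≤ m := by rcases hinit with h | ⟨h, h'⟩ <;> omega
    have hm2' : (2 : ℚ) ≤ (m : ℚ) := by exact_mod_cast hm2
    obtain ⟨hV, hVD, hVa⟩ := run_pos b k (k - 1) 2 (by omega)
      (fun p hp1 hp2 => by have := hc p hp1 (by omega); omega) htop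
    rw [show 2 + (k - 1) = k + 1 by omega, tcf_top, hr] at hV
    norm_num at hV
    have hV2' : tcf b k 2 = (2 * (q : ℚ)) / (1 + 2 * q) := by
      rw [eq_div_iff (ne_of_gt hden)]
      linear_combination hV
    refine Or.inl ⟨m - 1, -(q : ℤ), by omega, by omega, by omega, ?_⟩
    have hy : (2 * ((-(q : ℤ) : ℤ) : ℚ) - 1) ≠ 0 := by push_cast; nlinarith
    rw [hvc, hV2']
    rw [sub_div_eq _ _ _ (ne_of_gt hden), inv_div]
    rw [cf2 _ _ hy]
    rw [div_eq_div_iff (by nlinarith) (by push_cast; nlinarith)]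
    push_cast
    ring
  · -- ε = -1
    obtain ⟨hV, hVD, hVa⟩ := run_neg b k (k - 1) 2 (by omega)
      (fun p hp1 hp2 => by have := hc p hp1 (by omega); omega) htop
    rw [show 2 + (k - 1) = k + 1 by omega, tcf_top, hr] at hV
    norm_num at hV
    have hV2' : tcf b k 2 = (-(2 * (q : ℚ))) / (1 + 2 * q) := by
      rw [eq_div_iff (ne_of_gt hden)]
      linear_combination hV
    refine Or.inl ⟨m, (q : ℤ) + 1, by omega, by omega, by omega, ?_⟩
    have hy : (2 * (((q : ℤ) + 1 : ℤ) : ℚ) - 1) ≠ 0 := by push_cast; nlinarith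
    rw [hvc, hV2']
    rw [sub_div_eq _ _ _ (ne_of_gt hden), inv_div]
    rw [cf2 _ _ hy]
    rw [div_eq_div_iff (by nlinarith) (by push_cast; nlinarith)]
    push_cast
    ring

lemma leafG (b : ℕ → ℤ) (k : ℕ) (hk : 3 ≤ k) (hkodd : Odd k)
    (j : ℕ) (hj2 : 2 ≤ j) (hjk : j ≤ k - 2)
    (ε : ℤ) (hε : ε = 1 ∨ ε = -1)
    (h1 : ∀ p, 2 ≤ p → p ≤ j → b p = 2 * ε)
    (h2 : ∀ p, j + 1 ≤ p → p ≤ k → b p = -(2 * ε))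
    (m : ℤ) (hm : b 1 = 2 * m)
    (hinit : 4 ≤ b 1 ∨ (b 1 = 2 ∧ b 2 ≤ -2))
    (v : ℚ) (hv : v = tcf b k 1) : Goal v := by
  obtain ⟨w, hw⟩ := hkodd
  set a := j - 1 with hadef
  set c := k - j with hcdef
  have hbounds : 1 ≤ a ∧ 2 ≤ c ∧ a + c = k - 1 := by omega
  have hm1 : 1 ≤ m := by rcases hinit with h | ⟨h, _⟩ <;> omega
  have hm1' : (1 : ℚ) ≤ (m : ℚ) := by exact_mod_cast hm1
  have htop : |tcf b k (j + 1 + c)| < 1 := by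
    rw [show j + 1 + c = k + 1 by omega, tcf_top]; norm_num
  have hvc : v = (2 * (m : ℚ) - tcf b k 2)⁻¹ := by
    rw [hv, tcf_cons b k 1 (by omega), hm]; push_cast; ring_nf
  have ha1 : (1 : ℚ) ≤ (a : ℚ) := by exact_mod_cast hbounds.1
  have hc2 : (2 : ℚ) ≤ (c : ℚ) := by exact_mod_cast hbounds.2.1
  have hQ : (0 : ℚ) < 2 * (a : ℚ) * c + a + c + 1 := by positivity
  have hP : (0 : ℚ) < 2 * (a : ℚ) * c + a - c := by
    nlinarith [mul_nonneg (by linarith : (0:ℚ) ≤ (a:ℚ) - 1) (by linarith : (0:ℚ) ≤ 2*(c:ℚ) + 1)]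
  have hmQ : (0 : ℚ) ≤ ((m : ℚ) - 1) * (2 * (a : ℚ) * c + a + c + 1) :=
    mul_nonneg (by linarith) (le_of_lt hQ)
  rcases hε with rfl | rfl
  · -- ε = 1
    have hb2 : b 2 = 2 := by have := h1 2 (by omega) (by omega); omega
    have hm2 : 2 ≤ m := by rcases hinit with h | ⟨h, h'⟩ <;> omega
    have hm2' : (2 : ℚ) ≤ (m : ℚ) := by exact_mod_cast hm2
    obtain ⟨hW, hWD, hWa⟩ := run_neg b k c (j + 1) (by omega)
      (fun p hp1 hp2 => by have := h2 p hp1 (by omega); omega) htop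
    rw [show j + 1 + c = k + 1 by omega, tcf_top] at hW
    obtain ⟨hV, hVD, hVa⟩ := run_pos b k a 2 (by omega)
      (fun p hp1 hp2 => by have := h1 p hp1 (by omega); omega)
      (by rw [show 2 + a = j + 1 by omega]; exact hWa)
    rw [show 2 + a = j + 1 by omega] at hV
    have hV2' : tcf b k 2 = (2 * (a : ℚ) * c + a - c) / (2 * a * c + a + c + 1) := by
      rw [eq_div_iff (ne_of_gt hQ)]
      linear_combination (1 + (c : ℚ)) * hV
        + ((a : ℚ) * tcf b k 2 + (1 - (a : ℚ))) * hW
    have kL : 2 * (m : ℚ) * (2 * (a : ℚ) * c + a + c + 1) - (2 * (a : ℚ) * c + a - c) ≠ 0 := by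
      intro h; nlinarith [hmQ, hQ, hP]
    rcases Nat.even_or_odd a with ⟨α, hα⟩ | ⟨α, hα⟩
    · -- a, c even : form (6), witnesses (m-1, -α, γ)
      obtain ⟨γ, hγ, hγ1⟩ : ∃ γ, c = 2 * γ ∧ 1 ≤ γ := ⟨c / 2, by omega, by omega⟩
      have hα1 : 1 ≤ α := by omega
      have haq : (a : ℚ) = 2 * (α : ℚ) := by rw [hα]; push_cast; ring
      have hcq : (c : ℚ) = 2 * (γ : ℚ) := by rw [hγ]; push_cast; ring
      have hα1' : (1 : ℚ) ≤ (α : ℚ) := by exact_mod_cast hα1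
      have hγ1' : (1 : ℚ) ≤ (γ : ℚ) := by exact_mod_cast hγ1
      have hN4 : (0 : ℚ) < 8 * (α:ℚ) * γ + 2 * α + 2 * γ + 1 := by
        nlinarith [mul_nonneg (by linarith : (0:ℚ) ≤ (α:ℚ)) (by linarith : (0:ℚ) ≤ (γ:ℚ))]
      have k4a : (2 * (((γ : ℤ) : ℚ))) ≠ 0 := by
        intro h; push_cast at h; linarith
      have k4b : (-2 : ℚ) * (2 * (((γ : ℤ) : ℚ))) - 1 ≠ 0 := by
        intro h; push_cast at h; linarith
      have k4c : (2 * (((-(α : ℤ) : ℤ)) : ℚ) - 1) * ((-2 : ℚ) * (2 * (((γ : ℤ) : ℚ))) - 1)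
          - (2 * (((γ : ℤ) : ℚ))) ≠ 0 := by
        intro h; push_cast at h; nlinarith [hN4]
      have k4d : (2 * (((m - 1 : ℤ)) : ℚ) + 1) *
          ((2 * (((-(α : ℤ) : ℤ)) : ℚ) - 1) * ((-2 : ℚ) * (2 * (((γ : ℤ) : ℚ))) - 1)
            - (2 * (((γ : ℤ) : ℚ)))) -
          ((-2 : ℚ) * (2 * (((γ : ℤ) : ℚ))) - 1) ≠ 0 := by
        intro h; push_cast at h
        nlinarith [hN4, mul_pos (show (0:ℚ) < 2 * (m:ℚ) - 3 + 2 by linarith) hN4]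
      refine Or.inr (Or.inr (Or.inr (Or.inr (Or.inr (Or.inr (Or.inl
        ⟨m - 1, -(α : ℤ), (γ : ℤ), by omega, by omega, by omega, ?_⟩))))))
      rw [hvc, hV2', sub_div_eq _ _ _ (ne_of_gt hQ), inv_div,
        cf4_s16 _ _ _ _ k4a k4b k4c, div_eq_div_iff kL k4d]
      rw [haq, hcq]
      push_cast
      ring
    · -- a, c odd : form (5), witnesses (m-1, -(α+1), γ) where a = 2α+1, c = 2γ-1, γ ≥ 2
      obtain ⟨γ, hγ, hγ2⟩ : ∃ γ, c + 1 = 2 * γ ∧ 2 ≤ γ := ⟨(c + 1) / 2, by omega, by omega⟩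
      have haq : (a : ℚ) = 2 * (α : ℚ) + 1 := by rw [hα]; push_cast; ring
      have hcq : (c : ℚ) = 2 * (γ : ℚ) - 1 := by
        have h' : ((c : ℚ) + 1) = 2 * (γ : ℚ) := by exact_mod_cast hγ
        linarith
      have hα0' : (0 : ℚ) ≤ (α : ℚ) := by positivity
      have hγ2' : (2 : ℚ) ≤ (γ : ℚ) := by exact_mod_cast hγ2
      have hN4 : (0 : ℚ) < 8 * (α:ℚ) * γ - 2 * α + 6 * γ - 1 := by
        nlinarith [mul_nonneg hα0' (by linarith : (0:ℚ) ≤ 4 * (γ:ℚ) - 1)]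
      have k4a : (2 * (((γ : ℤ) : ℚ)) - 1) ≠ 0 := by
        intro h; push_cast at h; linarith
      have k4b : (-2 : ℚ) * (2 * (((γ : ℤ) : ℚ)) - 1) - 1 ≠ 0 := by
        intro h; push_cast at h; linarith
      have k4c : (2 * (((-((α : ℤ) + 1) : ℤ)) : ℚ)) * ((-2 : ℚ) * (2 * (((γ : ℤ) : ℚ)) - 1) - 1)
          - (2 * (((γ : ℤ) : ℚ)) - 1) ≠ 0 := by
        intro h; push_cast at h; nlinarith [hN4]
      have k4d : (2 * (((m - 1 : ℤ)) : ℚ) + 1) *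
          ((2 * (((-((α : ℤ) + 1) : ℤ)) : ℚ)) * ((-2 : ℚ) * (2 * (((γ : ℤ) : ℚ)) - 1) - 1)
            - (2 * (((γ : ℤ) : ℚ)) - 1)) -
          ((-2 : ℚ) * (2 * (((γ : ℤ) : ℚ)) - 1) - 1) ≠ 0 := by
        intro h; push_cast at h
        nlinarith [hN4, mul_pos (show (0:ℚ) < 2 * (m:ℚ) - 1 by linarith) hN4]
      refine Or.inr (Or.inr (Or.inr (Or.inr (Or.inr (Or.inl
        ⟨m - 1, -((α : ℤ) + 1), (γ : ℤ), by omega, by omega, by omega, ?_⟩)))))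
      rw [hvc, hV2', sub_div_eq _ _ _ (ne_of_gt hQ), inv_div,
        cf4_s16 _ _ _ _ k4a k4b k4c, div_eq_div_iff kL k4d]
      rw [haq, hcq]
      push_cast
      ring
  · -- ε = -1
    obtain ⟨hW, hWD, hWa⟩ := run_pos b k c (j + 1) (by omega)
      (fun p hp1 hp2 => by have := h2 p hp1 (by omega); omega) htop
    rw [show j + 1 + c = k + 1 by omega, tcf_top] at hW
    obtain ⟨hV, hVD, hVa⟩ := run_neg b k a 2 (by omega)
      (fun p hp1 hp2 => by have := h1 p hp1 (by omega); omega)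
      (by rw [show 2 + a = j + 1 by omega]; exact hWa)
    rw [show 2 + a = j + 1 by omega] at hV
    have hV2' : tcf b k 2 = (-(2 * (a : ℚ) * c + a - c)) / (2 * a * c + a + c + 1) := by
      rw [eq_div_iff (ne_of_gt hQ)]
      linear_combination (1 + (c : ℚ)) * hV
        + ((1 - (a : ℚ)) - (a : ℚ) * tcf b k 2) * hW
    have kL : 2 * (m : ℚ) * (2 * (a : ℚ) * c + a + c + 1) - (-(2 * (a : ℚ) * c + a - c)) ≠ 0 := by
      intro h; nlinarith [hmQ, hQ, hP]
    rcases Nat.even_or_odd a with ⟨α, hα⟩ | ⟨α, hα⟩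
    · -- even : form (8), witnesses (m, α+1, -γ)
      obtain ⟨γ, hγ, hγ1⟩ : ∃ γ, c = 2 * γ ∧ 1 ≤ γ := ⟨c / 2, by omega, by omega⟩
      have hα1 : 1 ≤ α := by omega
      have haq : (a : ℚ) = 2 * (α : ℚ) := by rw [hα]; push_cast; ring
      have hcq : (c : ℚ) = 2 * (γ : ℚ) := by rw [hγ]; push_cast; ring
      have hα1' : (1 : ℚ) ≤ (α : ℚ) := by exact_mod_cast hα1
      have hγ1' : (1 : ℚ) ≤ (γ : ℚ) := by exact_mod_cast hγ1
      have hN4 : (0 : ℚ) < 8 * (α:ℚ) * γ + 2 * α + 2 * γ + 1 := by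
        nlinarith [mul_nonneg (by linarith : (0:ℚ) ≤ (α:ℚ)) (by linarith : (0:ℚ) ≤ (γ:ℚ))]
      have k4a : (2 * (((-(γ : ℤ) : ℤ)) : ℚ)) ≠ 0 := by
        intro h; push_cast at h; linarith
      have k4b : (2 : ℚ) * (2 * (((-(γ : ℤ) : ℤ)) : ℚ)) - 1 ≠ 0 := by
        intro h; push_cast at h; linarith
      have k4c : (2 * ((((α : ℤ) + 1 : ℤ)) : ℚ) - 1) * ((2 : ℚ) * (2 * (((-(γ : ℤ) : ℤ)) : ℚ)) - 1)
          - (2 * (((-(γ : ℤ) : ℤ)) : ℚ)) ≠ 0 := by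
        intro h; push_cast at h
        have h' : 8 * (α:ℚ) * γ + 2 * α + 2 * γ + 1 = 0 := by linear_combination -h
        linarith [hN4]
      have k4d : (2 * ((m : ℤ) : ℚ) + 1) *
          ((2 * ((((α : ℤ) + 1 : ℤ)) : ℚ) - 1) * ((2 : ℚ) * (2 * (((-(γ : ℤ) : ℤ)) : ℚ)) - 1)
            - (2 * (((-(γ : ℤ) : ℤ)) : ℚ))) -
          ((2 : ℚ) * (2 * (((-(γ : ℤ) : ℤ)) : ℚ)) - 1) ≠ 0 := by
        intro h; push_cast at h
        have h' : (2 * (m:ℚ) + 1) * (8 * (α:ℚ) * γ + 2 * α + 2 * γ + 1) - 4 * γ - 1 = 0 := by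
          linear_combination -h
        have h3 : 3 * (8 * (α:ℚ) * γ + 2 * α + 2 * γ + 1)
            ≤ (2 * (m:ℚ) + 1) * (8 * (α:ℚ) * γ + 2 * α + 2 * γ + 1) :=
          mul_le_mul_of_nonneg_right (by linarith) (le_of_lt hN4)
        have h4 : (0:ℚ) ≤ (α:ℚ) * γ := mul_nonneg (by linarith) (by linarith)
        linarith
      refine Or.inr (Or.inr (Or.inr (Or.inr (Or.inr (Or.inr (Or.inr (Or.inr
        ⟨m, (α : ℤ) + 1, -(γ : ℤ), by omega, by omega, by omega, ?_⟩)))))))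
      rw [hvc, hV2', sub_div_eq _ _ _ (ne_of_gt hQ), inv_div,
        cf4_s16 _ _ _ _ k4a k4b k4c, div_eq_div_iff kL k4d]
      rw [haq, hcq]
      push_cast
      ring
    · -- odd : form (7), witnesses (m, α+1, 1-γ)
      obtain ⟨γ, hγ, hγ2⟩ : ∃ γ, c + 1 = 2 * γ ∧ 2 ≤ γ := ⟨(c + 1) / 2, by omega, by omega⟩
      have haq : (a : ℚ) = 2 * (α : ℚ) + 1 := by rw [hα]; push_cast; ring
      have hcq : (c : ℚ) = 2 * (γ : ℚ) - 1 := by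
        have h' : ((c : ℚ) + 1) = 2 * (γ : ℚ) := by exact_mod_cast hγ
        linarith
      have hα0' : (0 : ℚ) ≤ (α : ℚ) := by positivity
      have hγ2' : (2 : ℚ) ≤ (γ : ℚ) := by exact_mod_cast hγ2
      have hN4 : (0 : ℚ) < 8 * (α:ℚ) * γ - 2 * α + 6 * γ - 1 := by
        nlinarith [mul_nonneg hα0' (by linarith : (0:ℚ) ≤ 4 * (γ:ℚ) - 1)]
      have k4a : (2 * (((1 - (γ : ℤ) : ℤ)) : ℚ) - 1) ≠ 0 := by
        intro h; push_cast at h; linarith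
      have k4b : (2 : ℚ) * (2 * (((1 - (γ : ℤ) : ℤ)) : ℚ) - 1) - 1 ≠ 0 := by
        intro h; push_cast at h; linarith
      have k4c : (2 * ((((α : ℤ) + 1 : ℤ)) : ℚ)) * ((2 : ℚ) * (2 * (((1 - (γ : ℤ) : ℤ)) : ℚ) - 1) - 1)
          - (2 * (((1 - (γ : ℤ) : ℤ)) : ℚ) - 1) ≠ 0 := by
        intro h; push_cast at h
        have h' : 8 * (α:ℚ) * γ - 2 * α + 6 * γ - 1 = 0 := by linear_combination -h
        linarith [hN4]
      have k4d : (2 * ((m : ℤ) : ℚ) + 1) *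
          ((2 * ((((α : ℤ) + 1 : ℤ)) : ℚ)) * ((2 : ℚ) * (2 * (((1 - (γ : ℤ) : ℤ)) : ℚ) - 1) - 1)
            - (2 * (((1 - (γ : ℤ) : ℤ)) : ℚ) - 1)) -
          ((2 : ℚ) * (2 * (((1 - (γ : ℤ) : ℤ)) : ℚ) - 1) - 1) ≠ 0 := by
        intro h; push_cast at h
        have h' : (2 * (m:ℚ) + 1) * (8 * (α:ℚ) * γ - 2 * α + 6 * γ - 1) - 4 * γ + 1 = 0 := by
          linear_combination -h
        have h3 : 3 * (8 * (α:ℚ) * γ - 2 * α + 6 * γ - 1)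
            ≤ (2 * (m:ℚ) + 1) * (8 * (α:ℚ) * γ - 2 * α + 6 * γ - 1) :=
          mul_le_mul_of_nonneg_right (by linarith) (le_of_lt hN4)
        have h4 : (0:ℚ) ≤ (α:ℚ) * (4 * γ - 1) := mul_nonneg hα0' (by linarith)
        linarith
      refine Or.inr (Or.inr (Or.inr (Or.inr (Or.inr (Or.inr (Or.inr (Or.inl
        ⟨m, (α : ℤ) + 1, 1 - (γ : ℤ), by omega, by omega, by omega, ?_⟩)))))))
      rw [hvc, hV2', sub_div_eq _ _ _ (ne_of_gt hQ), inv_div,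
        cf4_s16 _ _ _ _ k4a k4b k4c, div_eq_div_iff kL k4d]
      rw [haq, hcq]
      push_cast
      ring

lemma leafR2 (b : ℕ → ℤ) (k : ℕ) (hk : 3 ≤ k) (hkodd : Odd k)
    (ε : ℤ) (hε : ε = 1 ∨ ε = -1)
    (h1 : ∀ p, 2 ≤ p → p ≤ k - 1 → b p = 2 * ε)
    (t : ℤ) (ht : b k = 2 * t) (ht0 : t ≠ 0) (htε : t ≠ ε)
    (m : ℤ) (hm : b 1 = 2 * m)
    (hinit : 4 ≤ b 1 ∨ (b 1 = 2 ∧ b 2 ≤ -2))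
    (v : ℚ) (hv : v = tcf b k 1) : Goal v := by
  obtain ⟨w, hw⟩ := hkodd
  set a := k - 2 with hadef
  obtain ⟨α, hα, hα1⟩ : ∃ α, a + 1 = 2 * α ∧ 1 ≤ α := ⟨(a + 1) / 2, by omega, by omega⟩
  have hm1 : 1 ≤ m := by rcases hinit with h | ⟨h, _⟩ <;> omega
  have hm1' : (1 : ℚ) ≤ (m : ℚ) := by exact_mod_cast hm1
  have ha1 : (1 : ℚ) ≤ (a : ℚ) := by exact_mod_cast (by omega : 1 ≤ a)
  have haq : (a : ℚ) = 2 * (α : ℚ) - 1 := by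
    have h' : ((a : ℚ) + 1) = 2 * (α : ℚ) := by exact_mod_cast hα
    linarith
  have hα1' : (1 : ℚ) ≤ (α : ℚ) := by exact_mod_cast hα1
  have hts : (t : ℚ) ≤ -1 ∨ 1 ≤ (t : ℚ) := by
    rcases (by omega : t ≤ -1 ∨ 1 ≤ t) with h | h
    · exact Or.inl (by exact_mod_cast h)
    · exact Or.inr (by exact_mod_cast h)
  have ht2' : (2 * (t : ℚ)) ≠ 0 := by rcases hts with h | h <;> intro hh <;> linarith
  have hWk : tcf b k k = (2 * (t : ℚ))⁻¹ := by
    rw [tcf_cons b k k (le_refl k), tcf_top, ht]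
    push_cast
    norm_num
  have hWrel : tcf b k k * (2 * (t : ℚ)) = 1 := by rw [hWk]; exact inv_mul_cancel₀ ht2'
  have hWabs : |tcf b k k| < 1 := by
    rw [hWk, abs_inv, inv_lt_one_iff₀]
    right
    rcases hts with h | h
    · rw [abs_of_neg (by linarith)]; linarith
    · rw [abs_of_pos (by linarith)]; linarith
  have hvc : v = (2 * (m : ℚ) - tcf b k 2)⁻¹ := by
    rw [hv, tcf_cons b k 1 (by omega), hm]; push_cast; ring_nf
  rcases hε with rfl | rfl
  · -- ε = 1 : form (4), witnesses (m-1, -α, t)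
    have hb2 : b 2 = 2 := by have := h1 2 (by omega) (by omega); omega
    have hm2 : 2 ≤ m := by rcases hinit with h | ⟨h, h'⟩ <;> omega
    have hm2' : (2 : ℚ) ≤ (m : ℚ) := by exact_mod_cast hm2
    obtain ⟨hV, hVD, hVa⟩ := run_pos b k a 2 (by omega)
      (fun p hp1 hp2 => by have := h1 p hp1 (by omega); omega)
      (by rw [show 2 + a = k by omega]; exact hWabs)
    rw [show 2 + a = k by omega] at hV
    have hDV : (2 * (t : ℚ) * (1 + (a : ℚ)) - a) ≠ 0 := by
      rcases hts with h | h <;> intro hh <;> nlinarith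
    have hV2' : tcf b k 2 = ((1 - (a : ℚ)) + 2 * (a : ℚ) * t) / (2 * (t : ℚ) * (1 + (a : ℚ)) - a) := by
      rw [eq_div_iff hDV]
      linear_combination 2 * (t : ℚ) * hV + ((a : ℚ) * tcf b k 2 + (1 - (a : ℚ))) * hWrel
    have kL : 2 * (m : ℚ) * (2 * (t : ℚ) * (1 + (a : ℚ)) - a) - ((1 - (a : ℚ)) + 2 * (a : ℚ) * t) ≠ 0 := by
      rcases hts with h | h
      · have hDVn : (0 : ℚ) ≤ -(2 * (t : ℚ) * (1 + (a : ℚ)) - a) := by nlinarith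
        intro hh
        nlinarith [mul_nonneg (by linarith : (0 : ℚ) ≤ (m : ℚ) - 1) hDVn,
          mul_nonneg (by linarith : (0 : ℚ) ≤ (a : ℚ)) (by linarith : (0 : ℚ) ≤ 1 - 2 * (t : ℚ))]
      · have hDVp : (0 : ℚ) ≤ 2 * (t : ℚ) * (1 + (a : ℚ)) - a := by nlinarith
        intro hh
        nlinarith [mul_nonneg (by linarith : (0 : ℚ) ≤ (m : ℚ) - 1) hDVp,
          mul_nonneg (by linarith : (0 : ℚ) ≤ (a : ℚ)) (by linarith : (0 : ℚ) ≤ 2 * (t : ℚ) - 1)]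
    have k3a : (2 * ((t : ℤ) : ℚ) - 1) ≠ 0 := by
      intro h; rcases hts with h' | h' <;> (push_cast at h; linarith)
    have k3b : (2 * (((-(α : ℤ) : ℤ)) : ℚ)) * (2 * ((t : ℤ) : ℚ) - 1) - 1 ≠ 0 := by
      intro h; push_cast at h
      rcases hts with h' | h'
      · nlinarith [mul_nonneg (by linarith : (0:ℚ) ≤ (α:ℚ)) (by linarith : (0:ℚ) ≤ 1 - 2*(t:ℚ))]
      · nlinarith [mul_nonneg (by linarith : (0:ℚ) ≤ (α:ℚ)) (by linarith : (0:ℚ) ≤ 2*(t:ℚ) - 1)]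
    have k3c : (2 * ((m - 1 : ℤ) : ℚ) + 1) *
        ((2 * (((-(α : ℤ) : ℤ)) : ℚ)) * (2 * ((t : ℤ) : ℚ) - 1) - 1) - (2 * ((t : ℤ) : ℚ) - 1) ≠ 0 := by
      intro h; push_cast at h
      rcases hts with h' | h'
      · have hX : (0:ℚ) ≤ -2 * (α:ℚ) * (2 * (t:ℚ) - 1) - 1 :=
          by nlinarith [mul_nonneg (by linarith : (0:ℚ) ≤ (α:ℚ)) (by linarith : (0:ℚ) ≤ 1 - 2*(t:ℚ))]
        nlinarith [mul_nonneg (by linarith : (0:ℚ) ≤ 2*(m:ℚ) - 3) hX]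
      · have hX : (0:ℚ) ≤ -(-2 * (α:ℚ) * (2 * (t:ℚ) - 1) - 1) - 2 :=
          by nlinarith [mul_nonneg (by linarith : (0:ℚ) ≤ (α:ℚ) - 1) (by linarith : (0:ℚ) ≤ 2*(t:ℚ) - 1),
            mul_nonneg (by linarith : (0:ℚ) ≤ (1:ℚ)) (by linarith : (0:ℚ) ≤ 2*(t:ℚ) - 1)]
        nlinarith [mul_nonneg (by linarith : (0:ℚ) ≤ 2*(m:ℚ) - 3) hX]
    refine Or.inr (Or.inr (Or.inr (Or.inr (Or.inl
      ⟨m - 1, -(α : ℤ), t, by omega, by omega, by omega, by omega, ?_⟩))))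
    rw [hvc, hV2', sub_div_eq _ _ _ hDV, inv_div, cf3 _ _ _ k3a k3b, div_eq_div_iff kL k3c]
    rw [haq]
    push_cast
    ring
  · -- ε = -1 : form (4), witnesses (m, α, t+1)
    have hts2 : (t : ℚ) ≤ -2 ∨ 1 ≤ (t : ℚ) := by
      rcases (by omega : t ≤ -2 ∨ 1 ≤ t) with h | h
      · exact Or.inl (by exact_mod_cast h)
      · exact Or.inr (by exact_mod_cast h)
    obtain ⟨hV, hVD, hVa⟩ := run_neg b k a 2 (by omega)
      (fun p hp1 hp2 => by have := h1 p hp1 (by omega); omega)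
      (by rw [show 2 + a = k by omega]; exact hWabs)
    rw [show 2 + a = k by omega] at hV
    have hDV : (2 * (t : ℚ) * (1 + (a : ℚ)) + a) ≠ 0 := by
      rcases hts2 with h | h <;> intro hh <;> nlinarith
    have hV2' : tcf b k 2 = ((1 - (a : ℚ)) - 2 * (a : ℚ) * t) / (2 * (t : ℚ) * (1 + (a : ℚ)) + a) := by
      rw [eq_div_iff hDV]
      linear_combination 2 * (t : ℚ) * hV + ((1 - (a : ℚ)) - (a : ℚ) * tcf b k 2) * hWrel
    have kL : 2 * (m : ℚ) * (2 * (t : ℚ) * (1 + (a : ℚ)) + a) - ((1 - (a : ℚ)) - 2 * (a : ℚ) * t) ≠ 0 := by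
      rcases hts2 with h | h
      · have hDVn : (0 : ℚ) ≤ -(2 * (t : ℚ) * (1 + (a : ℚ)) + a) := by nlinarith
        intro hh
        nlinarith [mul_nonneg (by linarith : (0 : ℚ) ≤ (m : ℚ) - 1) hDVn,
          mul_nonneg (by linarith : (0 : ℚ) ≤ (a : ℚ)) (by linarith : (0 : ℚ) ≤ -2 * (t : ℚ) - 1)]
      · have hDVp : (0 : ℚ) ≤ 2 * (t : ℚ) * (1 + (a : ℚ)) + a := by nlinarith
        intro hh
        nlinarith [mul_nonneg (by linarith : (0 : ℚ) ≤ (m : ℚ) - 1) hDVp,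
          mul_nonneg (by linarith : (0 : ℚ) ≤ (a : ℚ)) (by linarith : (0 : ℚ) ≤ 2 * (t : ℚ) + 1)]
    have k3a : (2 * ((t + 1 : ℤ) : ℚ) - 1) ≠ 0 := by
      intro h; rcases hts2 with h' | h' <;> (push_cast at h; linarith)
    have k3b : (2 * ((α : ℤ) : ℚ)) * (2 * ((t + 1 : ℤ) : ℚ) - 1) - 1 ≠ 0 := by
      intro h; push_cast at h
      rcases hts2 with h' | h'
      · nlinarith [mul_nonneg (by linarith : (0:ℚ) ≤ (α:ℚ)) (by linarith : (0:ℚ) ≤ -(2*(t:ℚ) + 1))]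
      · nlinarith [mul_nonneg (by linarith : (0:ℚ) ≤ (α:ℚ)) (by linarith : (0:ℚ) ≤ 2*(t:ℚ) + 1)]
    have k3c : (2 * ((m : ℤ) : ℚ) + 1) *
        ((2 * ((α : ℤ) : ℚ)) * (2 * ((t + 1 : ℤ) : ℚ) - 1) - 1) - (2 * ((t + 1 : ℤ) : ℚ) - 1) ≠ 0 := by
      intro h; push_cast at h
      rcases hts2 with h' | h'
      · have hX : (0:ℚ) ≤ -(2 * (α:ℚ) * (2 * (t:ℚ) + 1) - 1) - 2 := by
          nlinarith [mul_nonneg (by linarith : (0:ℚ) ≤ (α:ℚ) - 1) (by linarith : (0:ℚ) ≤ -(2*(t:ℚ) + 1)),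
            mul_nonneg (by linarith : (0:ℚ) ≤ (1:ℚ)) (by linarith : (0:ℚ) ≤ -(2*(t:ℚ) + 1))]
        nlinarith [mul_nonneg (by linarith : (0:ℚ) ≤ 2*(m:ℚ) - 1) hX]
      · have hX : (0:ℚ) ≤ (2 * (α:ℚ) * (2 * (t:ℚ) + 1) - 1) - 2 * (t:ℚ) - 1 := by
          nlinarith [mul_nonneg (by linarith : (0:ℚ) ≤ (α:ℚ) - 1) (by linarith : (0:ℚ) ≤ 2*(t:ℚ) + 1)]
        nlinarith [mul_nonneg (by linarith : (0:ℚ) ≤ 2*(m:ℚ) - 1) hX]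
    refine Or.inr (Or.inr (Or.inr (Or.inr (Or.inl
      ⟨m, (α : ℤ), t + 1, by omega, by omega, by omega, by omega, ?_⟩))))
    rw [hvc, hV2', sub_div_eq _ _ _ hDV, inv_div, cf3 _ _ _ k3a k3b, div_eq_div_iff kL k3c]
    rw [haq]
    push_cast
    ring

lemma leafR1 (b : ℕ → ℤ) (k : ℕ) (hk : 3 ≤ k) (hkodd : Odd k)
    (δ : ℤ) (hδ : δ = 1 ∨ δ = -1)
    (s : ℤ) (hs : b 2 = 2 * s) (hs2 : s ≤ -2 ∨ 2 ≤ s)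
    (h1 : ∀ p, 3 ≤ p → p ≤ k → b p = 2 * δ)
    (m : ℤ) (hm : b 1 = 2 * m)
    (hinit : 4 ≤ b 1 ∨ (b 1 = 2 ∧ b 2 ≤ -2))
    (v : ℚ) (hv : v = tcf b k 1) : Goal v := by
  obtain ⟨w, hw⟩ := hkodd
  set c := k - 2 with hcdef
  obtain ⟨γ, hγ, hγ1⟩ : ∃ γ, c + 1 = 2 * γ ∧ 1 ≤ γ := ⟨(c + 1) / 2, by omega, by omega⟩
  have hm1 : 1 ≤ m := by rcases hinit with h | ⟨h, _⟩ <;> omega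
  have hm1' : (1 : ℚ) ≤ (m : ℚ) := by exact_mod_cast hm1
  have hc1 : (1 : ℚ) ≤ (c : ℚ) := by exact_mod_cast (by omega : 1 ≤ c)
  have hcne : ((1 : ℚ) + (c : ℚ)) ≠ 0 := by positivity
  have hcq : (c : ℚ) = 2 * (γ : ℚ) - 1 := by
    have h' : ((c : ℚ) + 1) = 2 * (γ : ℚ) := by exact_mod_cast hγ
    linarith
  have hγ1' : (1 : ℚ) ≤ (γ : ℚ) := by exact_mod_cast hγ1
  have hs' : (s : ℚ) ≤ -2 ∨ 2 ≤ (s : ℚ) := by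
    rcases hs2 with h | h
    · exact Or.inl (by exact_mod_cast h)
    · exact Or.inr (by exact_mod_cast h)
  have hmn : m = 1 → s ≤ -2 := by
    intro h; rcases hinit with h' | ⟨h', h''⟩ <;> rcases hs2 with h3 | h3 <;> omega
  have habs : 2 ≤ |s| := by
    rcases hs2 with h | h
    · rw [abs_of_nonpos (by omega)]; omega
    · rw [abs_of_nonneg (by omega)]; omega
  have htop : |tcf b k (3 + c)| < 1 := by
    rw [show 3 + c = k + 1 by omega, tcf_top]; norm_num
  have hvc : v = (2 * (m : ℚ) - tcf b k 2)⁻¹ := by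
    rw [hv, tcf_cons b k 1 (by omega), hm]; push_cast; ring_nf
  rcases hδ with rfl | rfl
  · -- δ = 1 : form (2), witnesses (m, s, γ)
    obtain ⟨hV3, hV3D, hV3a⟩ := run_pos b k c 3 (by omega)
      (fun p hp1 hp2 => by have := h1 p hp1 (by omega); omega) htop
    rw [show 3 + c = k + 1 by omega, tcf_top] at hV3
    have hV3' : tcf b k 3 = (c : ℚ) / (1 + c) := by
      rw [eq_div_iff hcne]; linear_combination hV3
    have hden2 : (2 * (s : ℚ) * (1 + (c : ℚ)) - c) ≠ 0 := by
      rcases hs' with h | h <;> intro hh <;> nlinarith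
    have hV2' : tcf b k 2 = (1 + (c : ℚ)) / (2 * (s : ℚ) * (1 + (c : ℚ)) - c) := by
      rw [tcf_cons b k 2 (by omega), hs, hV3']
      push_cast
      rw [sub_div_eq _ _ _ hcne, inv_div]
    have kL : 2 * (m : ℚ) * (2 * (s : ℚ) * (1 + (c : ℚ)) - c) - (1 + (c : ℚ)) ≠ 0 := by
      rcases hs' with h | h
      · have hDVn : (0 : ℚ) ≤ -(2 * (s : ℚ) * (1 + (c : ℚ)) - c) := by nlinarith
        intro hh
        nlinarith [mul_nonneg (by linarith : (0 : ℚ) ≤ (m : ℚ) - 1) hDVn]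
      · have hDVp : (0 : ℚ) ≤ 2 * (s : ℚ) * (1 + (c : ℚ)) - c := by nlinarith
        intro hh
        nlinarith [mul_nonneg (by linarith : (0 : ℚ) ≤ (m : ℚ) - 1) hDVp]
    have k3a : (-(2 * ((γ : ℤ) : ℚ))) ≠ 0 := by
      intro h; push_cast at h; linarith
    have k3b : (2 * ((s : ℤ) : ℚ) - 1) * (-(2 * ((γ : ℤ) : ℚ))) - 1 ≠ 0 := by
      intro h; push_cast at h
      rcases hs' with h' | h'
      · nlinarith [mul_nonneg (by linarith : (0:ℚ) ≤ -(2*(s:ℚ) - 1) - 1) (by linarith : (0:ℚ) ≤ (γ:ℚ))]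
      · nlinarith [mul_nonneg (by linarith : (0:ℚ) ≤ 2*(s:ℚ) - 1 - 1) (by linarith : (0:ℚ) ≤ (γ:ℚ))]
    have k3c : (2 * ((m : ℤ) : ℚ)) *
        ((2 * ((s : ℤ) : ℚ) - 1) * (-(2 * ((γ : ℤ) : ℚ))) - 1) - (-(2 * ((γ : ℤ) : ℚ))) ≠ 0 := by
      intro h; push_cast at h
      rcases hs' with h' | h'
      · have hX : (0:ℚ) ≤ (2 * (s:ℚ) - 1) * (-(2 * (γ:ℚ))) - 1 - 2*(γ:ℚ) := by
          nlinarith [mul_nonneg (by linarith : (0:ℚ) ≤ -(2*(s:ℚ)) - 3) (by linarith : (0:ℚ) ≤ (γ:ℚ))]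
        nlinarith [mul_nonneg (by linarith : (0:ℚ) ≤ 2*(m:ℚ) - 2) hX]
      · have hX : (0:ℚ) ≤ -((2 * (s:ℚ) - 1) * (-(2 * (γ:ℚ))) - 1) - 2*(γ:ℚ) := by
          nlinarith [mul_nonneg (by linarith : (0:ℚ) ≤ 2*(s:ℚ) - 2) (by linarith : (0:ℚ) ≤ (γ:ℚ))]
        nlinarith [mul_nonneg (by linarith : (0:ℚ) ≤ 2*(m:ℚ) - 2) hX]
    refine Or.inr (Or.inr (Or.inl ⟨m, s, (γ : ℤ), hm1, habs, by omega, hmn, ?_⟩))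
    rw [hvc, hV2', sub_div_eq _ _ _ hden2, inv_div, cf3 _ _ _ k3a k3b, div_eq_div_iff kL k3c]
    rw [hcq]
    push_cast
    ring
  · -- δ = -1 : form (3), witnesses (m, s, γ)
    obtain ⟨hV3, hV3D, hV3a⟩ := run_neg b k c 3 (by omega)
      (fun p hp1 hp2 => by have := h1 p hp1 (by omega); omega) htop
    rw [show 3 + c = k + 1 by omega, tcf_top] at hV3
    have hV3' : tcf b k 3 = (-(c : ℚ)) / (1 + c) := by
      rw [eq_div_iff hcne]; linear_combination hV3
    have hden2 : (2 * (s : ℚ) * (1 + (c : ℚ)) - -(c : ℚ)) ≠ 0 := by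
      rcases hs' with h | h <;> intro hh <;> nlinarith
    have hV2' : tcf b k 2 = (1 + (c : ℚ)) / (2 * (s : ℚ) * (1 + (c : ℚ)) - -(c : ℚ)) := by
      rw [tcf_cons b k 2 (by omega), hs, hV3']
      push_cast
      rw [sub_div_eq _ _ _ hcne, inv_div]
    have kL : 2 * (m : ℚ) * (2 * (s : ℚ) * (1 + (c : ℚ)) - -(c : ℚ)) - (1 + (c : ℚ)) ≠ 0 := by
      rcases hs' with h | h
      · have hDVn : (0 : ℚ) ≤ -(2 * (s : ℚ) * (1 + (c : ℚ)) - -(c : ℚ)) := by nlinarith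
        intro hh
        nlinarith [mul_nonneg (by linarith : (0 : ℚ) ≤ (m : ℚ) - 1) hDVn]
      · have hDVp : (0 : ℚ) ≤ 2 * (s : ℚ) * (1 + (c : ℚ)) - -(c : ℚ) := by nlinarith
        intro hh
        nlinarith [mul_nonneg (by linarith : (0 : ℚ) ≤ (m : ℚ) - 1) hDVp]
    have k3a : (2 * ((γ : ℤ) : ℚ)) ≠ 0 := by
      intro h; push_cast at h; linarith
    have k3b : (2 * ((s : ℤ) : ℚ) + 1) * (2 * ((γ : ℤ) : ℚ)) - 1 ≠ 0 := by
      intro h; push_cast at h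
      rcases hs' with h' | h'
      · nlinarith [mul_nonneg (by linarith : (0:ℚ) ≤ -(2*(s:ℚ) + 1) - 1) (by linarith : (0:ℚ) ≤ (γ:ℚ))]
      · nlinarith [mul_nonneg (by linarith : (0:ℚ) ≤ 2*(s:ℚ) + 1 - 1) (by linarith : (0:ℚ) ≤ (γ:ℚ))]
    have k3c : (2 * ((m : ℤ) : ℚ)) *
        ((2 * ((s : ℤ) : ℚ) + 1) * (2 * ((γ : ℤ) : ℚ)) - 1) - (2 * ((γ : ℤ) : ℚ)) ≠ 0 := by
      intro h; push_cast at h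
      rcases hs' with h' | h'
      · have hX : (0:ℚ) ≤ -((2 * (s:ℚ) + 1) * (2 * (γ:ℚ)) - 1) - 2*(γ:ℚ) := by
          nlinarith [mul_nonneg (by linarith : (0:ℚ) ≤ -(2*(s:ℚ)) - 4) (by linarith : (0:ℚ) ≤ (γ:ℚ))]
        nlinarith [mul_nonneg (by linarith : (0:ℚ) ≤ 2*(m:ℚ) - 2) hX]
      · have hX : (0:ℚ) ≤ ((2 * (s:ℚ) + 1) * (2 * (γ:ℚ)) - 1) - 2*(γ:ℚ) - 2 := by
          nlinarith [mul_nonneg (by linarith : (0:ℚ) ≤ 2*(s:ℚ) - 1) (by linarith : (0:ℚ) ≤ (γ:ℚ))]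
        nlinarith [mul_nonneg (by linarith : (0:ℚ) ≤ 2*(m:ℚ) - 2) hX]
    refine Or.inr (Or.inr (Or.inr (Or.inl ⟨m, s, (γ : ℤ), hm1, habs, by omega, hmn, ?_⟩)))
    rw [hvc, hV2', sub_div_eq _ _ _ hden2, inv_div, cf3 _ _ _ k3a k3b, div_eq_div_iff kL k3c]
    rw [hcq]
    push_cast
    ring

lemma leafK3 (b : ℕ → ℤ) (s t m : ℤ) (hm : b 1 = 2 * m) (hs : b 2 = 2 * s) (ht : b 3 = 2 * t)
    (hs2 : s ≤ -2 ∨ 2 ≤ s) (ht2 : t ≤ -2 ∨ 2 ≤ t)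
    (hinit : 4 ≤ b 1 ∨ (b 1 = 2 ∧ b 2 ≤ -2))
    (v : ℚ) (hv : v = tcf b 3 1) : Goal v := by
  have hm1 : 1 ≤ m := by rcases hinit with h | ⟨h, _⟩ <;> omega
  have habs : 2 ≤ |s| := by
    rcases hs2 with h | h
    · rw [abs_of_nonpos (by omega)]; omega
    · rw [abs_of_nonneg (by omega)]; omega
  have htabs : 2 ≤ |t| := by
    rcases ht2 with h | h
    · rw [abs_of_nonpos (by omega)]; omega
    · rw [abs_of_nonneg (by omega)]; omega
  have hmn : m = 1 → s ≤ -2 := by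
    intro h; rcases hinit with h' | ⟨h', h''⟩ <;> rcases hs2 with h3 | h3 <;> omega
  refine Or.inr (Or.inl ⟨m, s, t, hm1, habs, htabs, hmn, ?_⟩)
  have h3 : tcf b 3 1 = cf [((b 1 : ℤ) : ℚ), ((b 2 : ℤ) : ℚ), ((b 3 : ℤ) : ℚ)] := by
    unfold tcf
    norm_num [List.range_succ]
  rw [hv, h3, hm, hs, ht]
  push_cast
  ring_nf

theorem stmt_16 (k : ℕ) (hk : 3 ≤ k) (hkodd : Odd k) (b : ℕ → ℤ)
    (hb : ∀ i, 1 ≤ i → i ≤ k → b i ≠ 0 ∧ Even (b i))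
    (hch : ((Finset.Icc 1 (k - 1)).filter (fun i => ChannelIndex b i)).card ≤ 2)
    (hinit : 4 ≤ b 1 ∨ (b 1 = 2 ∧ b 2 ≤ -2))
    (v : ℚ) (hv : v = cf ((List.range k).map fun i => ((b (i + 1) : ℚ)))) :
    (∃ m n : ℤ, 1 ≤ m ∧ n ≠ 0 ∧ n ≠ 1 ∧
      v = cf [2 * (m : ℚ) + 1, 2 * (n : ℚ) - 1]) ∨
    (∃ m n l : ℤ, 1 ≤ m ∧ 2 ≤ |n| ∧ 2 ≤ |l| ∧ (m = 1 → n ≤ -2) ∧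
      v = cf [2 * (m : ℚ), 2 * (n : ℚ), 2 * (l : ℚ)]) ∨
    (∃ m n l : ℤ, 1 ≤ m ∧ 2 ≤ |n| ∧ 1 ≤ l ∧ (m = 1 → n ≤ -2) ∧
      v = cf [2 * (m : ℚ), 2 * (n : ℚ) - 1, -(2 * (l : ℚ))]) ∨
    (∃ m n l : ℤ, 1 ≤ m ∧ 2 ≤ |n| ∧ 1 ≤ l ∧ (m = 1 → n ≤ -2) ∧
      v = cf [2 * (m : ℚ), 2 * (n : ℚ) + 1, 2 * (l : ℚ)]) ∨
    (∃ m n l : ℤ, 1 ≤ m ∧ n ≠ 0 ∧ l ≠ 0 ∧ l ≠ 1 ∧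
      v = cf [2 * (m : ℚ) + 1, 2 * (n : ℚ), 2 * (l : ℚ) - 1]) ∨
    (∃ m n l : ℤ, 1 ≤ m ∧ n ≤ -1 ∧ 2 ≤ l ∧
      v = cf [2 * (m : ℚ) + 1, 2 * (n : ℚ), -2, 2 * (l : ℚ) - 1]) ∨
    (∃ m n l : ℤ, 1 ≤ m ∧ n ≤ -1 ∧ 1 ≤ l ∧
      v = cf [2 * (m : ℚ) + 1, 2 * (n : ℚ) - 1, -2, 2 * (l : ℚ)]) ∨
    (∃ m n l : ℤ, 1 ≤ m ∧ 1 ≤ n ∧ l ≤ -1 ∧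
      v = cf [2 * (m : ℚ) + 1, 2 * (n : ℚ), 2, 2 * (l : ℚ) - 1]) ∨
    (∃ m n l : ℤ, 1 ≤ m ∧ 2 ≤ n ∧ l ≤ -1 ∧
      v = cf [2 * (m : ℚ) + 1, 2 * (n : ℚ) - 1, 2, 2 * (l : ℚ)]) := by
  have hv1 : v = tcf b k 1 := by
    have hfun : (fun p => ((b (1 + p) : ℤ) : ℚ)) = (fun i => ((b (i + 1) : ℤ) : ℚ)) := by
      funext p; rw [Nat.add_comm]
    rw [hv]; unfold tcf; rw [Nat.add_sub_cancel, hfun]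
  have hbne : ∀ i, 1 ≤ i → i ≤ k → b i ≠ 0 := fun i h1 h2 => (hb i h1 h2).1
  have hbev : ∀ i, 1 ≤ i → i ≤ k → ∃ u, b i = 2 * u := by
    intro i h1 h2
    obtain ⟨r, hr⟩ := (hb i h1 h2).2
    exact ⟨r, by omega⟩
  obtain ⟨m, hm⟩ := hbev 1 (by omega) (by omega)
  have hch1 : ChannelIndex b 1 := by
    obtain ⟨u, hu⟩ := hbev 2 (by omega) (by omega)
    have hu0 : u ≠ 0 := by intro h; exact hbne 2 (by omega) (by omega) (by omega)
    unfold ChannelIndex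
    show b 1 * b 2 < 0 ∨ 4 < b 1 * b 2
    rcases hinit with h | ⟨h, h'⟩
    · rcases (by omega : u ≤ -1 ∨ 1 ≤ u) with h2 | h2
      · left; exact mul_neg_of_pos_of_neg (by omega) (by omega)
      · right
        have h4 : (2 : ℤ) ≤ b 2 := by omega
        nlinarith
    · left; rw [h]; omega
  have hNC : ∀ i, 2 ≤ i → i ≤ k - 1 → ¬ChannelIndex b i →
      (b i = 2 ∧ b (i + 1) = 2) ∨ (b i = -2 ∧ b (i + 1) = -2) := by
    intro i h1 h2 hch'
    obtain ⟨u, hu⟩ := hbev i (by omega) (by omega)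
    obtain ⟨x, hx⟩ := hbev (i + 1) (by omega) (by omega)
    have hu0 : u ≠ 0 := by intro h; exact hbne i (by omega) (by omega) (by omega)
    have hx0 : x ≠ 0 := by intro h; exact hbne (i + 1) (by omega) (by omega) (by omega)
    unfold ChannelIndex at hch'
    push_neg at hch'
    obtain ⟨hc1, hc2⟩ := hch'
    rw [hu, hx] at hc1 hc2
    have h3 : 0 ≤ u * x := by nlinarith
    have h4 : u * x ≤ 1 := by nlinarith
    have h5 : u * x ≠ 0 := mul_ne_zero hu0 hx0
    have h7 : (0 : ℤ) < u * x := lt_of_le_of_ne h3 (Ne.symm h5)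
    have h8 : (1 : ℤ) ≤ u * x := by linarith [Int.add_one_le_iff.mpr h7]
    have h6 : u * x = 1 := le_antisymm h4 h8
    rcases Int.mul_eq_one_iff_eq_one_or_neg_one.mp h6 with ⟨h9, h10⟩ | ⟨h9, h10⟩
    · left; omega
    · right; omega
  have huniq : ∀ i1 i2, 2 ≤ i1 → i1 ≤ k - 1 → ChannelIndex b i1 →
      2 ≤ i2 → i2 ≤ k - 1 → ChannelIndex b i2 → i1 = i2 := by
    intro i1 i2 ha1 ha2 ha3 ha4 ha5 ha6
    by_contra hne
    have hsub : ({1, i1, i2} : Finset ℕ) ⊆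
        (Finset.Icc 1 (k - 1)).filter (fun i => ChannelIndex b i) := by
      intro x hx
      simp only [Finset.mem_insert, Finset.mem_singleton] at hx
      rcases hx with rfl | rfl | rfl
      · exact Finset.mem_filter.mpr ⟨Finset.mem_Icc.mpr ⟨by omega, by omega⟩, hch1⟩
      · exact Finset.mem_filter.mpr ⟨Finset.mem_Icc.mpr ⟨by omega, by omega⟩, ha3⟩
      · exact Finset.mem_filter.mpr ⟨Finset.mem_Icc.mpr ⟨by omega, by omega⟩, ha6⟩
    have hcard3 : ({1, i1, i2} : Finset ℕ).card = 3 := by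
      rw [Finset.card_insert_of_notMem
          (by simp only [Finset.mem_insert, Finset.mem_singleton]; push_neg; omega),
        Finset.card_insert_of_notMem (by simp only [Finset.mem_singleton]; exact hne),
        Finset.card_singleton]
    have hle := Finset.card_le_card hsub
    omega
  by_cases hex : ∃ j, 2 ≤ j ∧ j ≤ k - 1 ∧ ChannelIndex b j
  · obtain ⟨j, hj1, hj2, hjch⟩ := hex
    have hnc : ∀ i, 2 ≤ i → i ≤ k - 1 → i ≠ j →
        (b i = 2 ∧ b (i + 1) = 2) ∨ (b i = -2 ∧ b (i + 1) = -2) := by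
      intro i h1 h2 h3
      exact hNC i h1 h2 (fun hc => h3 (huniq i j h1 h2 hc hj1 hj2 hjch))
    have hconstL : ∀ p, 2 ≤ p → p ≤ j → b p = b 2 := by
      refine const_chain b 2 j (fun i h1 h2 => ?_)
      rcases hnc i h1 (by omega) (by omega) with ⟨e1, e2⟩ | ⟨e1, e2⟩ <;> omega
    have hconstR : ∀ p, j + 1 ≤ p → p ≤ k → b p = b (j + 1) := by
      refine const_chain b (j + 1) k (fun i h1 h2 => ?_)
      rcases hnc i (by omega) (by omega) (by omega) with ⟨e1, e2⟩ | ⟨e1, e2⟩ <;> omega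
    by_cases hjk2 : j ≤ k - 2
    · have hbj1 : b (j + 1) = 2 ∨ b (j + 1) = -2 := by
        rcases hnc (j + 1) (by omega) (by omega) (by omega) with ⟨e1, _⟩ | ⟨e1, _⟩
        · exact Or.inl e1
        · exact Or.inr e1
      have hbj : b j = b 2 := hconstL j (by omega) (le_refl j)
      by_cases hj3 : 3 ≤ j
      · have hb2v : b 2 = 2 ∨ b 2 = -2 := by
          rcases hnc 2 (by omega) (by omega) (by omega) with ⟨e1, _⟩ | ⟨e1, _⟩
          · exact Or.inl e1
          · exact Or.inr e1
        have hopp : b 2 = -b (j + 1) := by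
          rcases hb2v with h2v | h2v <;> rcases hbj1 with h3v | h3v
          · exfalso
            have hh := hjch; unfold ChannelIndex at hh
            rw [hbj, h2v, h3v] at hh; norm_num at hh
          · omega
          · omega
          · exfalso
            have hh := hjch; unfold ChannelIndex at hh
            rw [hbj, h2v, h3v] at hh; norm_num at hh
        rcases hb2v with h2v | h2v
        · exact leafG b k hk hkodd j hj1 hjk2 1 (Or.inl rfl)
            (fun p hp1 hp2 => by have := hconstL p hp1 hp2; omega)
            (fun p hp1 hp2 => by have := hconstR p hp1 hp2; omega)
            m hm hinit v hv1
        · exact leafG b k hk hkodd j hj1 hjk2 (-1) (Or.inr rfl)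
            (fun p hp1 hp2 => by have := hconstL p hp1 hp2; omega)
            (fun p hp1 hp2 => by have := hconstR p hp1 hp2; omega)
            m hm hinit v hv1
      · have hj2' : j = 2 := by omega
        subst hj2'
        obtain ⟨s, hsv⟩ := hbev 2 (by omega) (by omega)
        have hs0 : s ≠ 0 := by intro h; exact hbne 2 (by omega) (by omega) (by omega)
        rcases hbj1 with h3v | h3v
        · have hs1 : s ≠ 1 := by
            intro h
            have hh := hjch; unfold ChannelIndex at hh
            rw [hsv, h, h3v] at hh; norm_num at hh
          rcases (by omega : s = -1 ∨ (s ≤ -2 ∨ 2 ≤ s)) with h | h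
          · exact leafG b k hk hkodd 2 (by omega) hjk2 (-1) (Or.inr rfl)
              (fun p hp1 hp2 => by have := hconstL p hp1 hp2; omega)
              (fun p hp1 hp2 => by have := hconstR p hp1 hp2; omega)
              m hm hinit v hv1
          · exact leafR1 b k hk hkodd 1 (Or.inl rfl) s hsv h
              (fun p hp1 hp2 => by have := hconstR p hp1 hp2; omega)
              m hm hinit v hv1
        · have hs1 : s ≠ -1 := by
            intro h
            have hh := hjch; unfold ChannelIndex at hh
            rw [hsv, h, h3v] at hh; norm_num at hh
          rcases (by omega : s = 1 ∨ (s ≤ -2 ∨ 2 ≤ s)) with h | h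
          · exact leafG b k hk hkodd 2 (by omega) hjk2 1 (Or.inl rfl)
              (fun p hp1 hp2 => by have := hconstL p hp1 hp2; omega)
              (fun p hp1 hp2 => by have := hconstR p hp1 hp2; omega)
              m hm hinit v hv1
          · exact leafR1 b k hk hkodd (-1) (Or.inr rfl) s hsv h
              (fun p hp1 hp2 => by have := hconstR p hp1 hp2; omega)
              m hm hinit v hv1
    · have hjk1 : j = k - 1 := by omega
      subst hjk1
      obtain ⟨t, htv⟩ := hbev k (by omega) (le_refl k)
      have hbk1 : b (k - 1) = b 2 := hconstL (k - 1) (by omega) (le_refl _)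
      obtain ⟨s, hsv⟩ := hbev 2 (by omega) (by omega)
      have hs0 : s ≠ 0 := by intro h; exact hbne 2 (by omega) (by omega) (by omega)
      have ht0 : t ≠ 0 := by intro h; exact hbne k (by omega) (le_refl k) (by omega)
      by_cases hs1 : s = 1 ∨ s = -1
      · have htne : t ≠ s := by
          intro h
          have hh := hjch; unfold ChannelIndex at hh
          rw [show k - 1 + 1 = k by omega, hbk1, hsv, htv, h] at hh
          rcases hs1 with rfl | rfl <;> norm_num at hh
        rcases hs1 with rfl | rfl
        · exact leafR2 b k hk hkodd 1 (Or.inl rfl)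
            (fun p hp1 hp2 => by have := hconstL p hp1 (by omega); omega)
            t htv ht0 (by omega) m hm hinit v hv1
        · exact leafR2 b k hk hkodd (-1) (Or.inr rfl)
            (fun p hp1 hp2 => by have := hconstL p hp1 (by omega); omega)
            t htv ht0 (by omega) m hm hinit v hv1
      · push_neg at hs1
        obtain ⟨hs1a, hs1b⟩ := hs1
        have hk3 : k = 3 := by
          by_contra hne3
          have hk5 : 5 ≤ k := by obtain ⟨w, hw⟩ := hkodd; omega
          rcases hnc 2 (by omega) (by omega) (by omega) with ⟨e1, _⟩ | ⟨e1, _⟩ <;> omega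
        subst hk3
        have ht3 : b 3 = 2 * t := htv
        rcases (by omega : t = 1 ∨ t = -1 ∨ (t ≤ -2 ∨ 2 ≤ t)) with h | h | h
        · exact leafR1 b 3 (by omega) hkodd 1 (Or.inl rfl) s hsv (by omega)
            (fun p hp1 hp2 => by rw [Nat.le_antisymm hp2 hp1]; omega)
            m hm hinit v hv1
        · exact leafR1 b 3 (by omega) hkodd (-1) (Or.inr rfl) s hsv (by omega)
            (fun p hp1 hp2 => by rw [Nat.le_antisymm hp2 hp1]; omega)
            m hm hinit v hv1
        · exact leafK3 b s t m hm hsv ht3 (by omega) h hinit v hv1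
  · have hnc : ∀ i, 2 ≤ i → i ≤ k - 1 →
        (b i = 2 ∧ b (i + 1) = 2) ∨ (b i = -2 ∧ b (i + 1) = -2) := by
      intro i h1 h2
      exact hNC i h1 h2 (fun hc => hex ⟨i, h1, h2, hc⟩)
    have hconst : ∀ p, 2 ≤ p → p ≤ k → b p = b 2 := by
      refine const_chain b 2 k (fun i h1 h2 => ?_)
      rcases hnc i h1 (by omega) with ⟨e1, e2⟩ | ⟨e1, e2⟩ <;> omega
    have hb2 : b 2 = 2 ∨ b 2 = -2 := by
      rcases hnc 2 (by omega) (by omega) with ⟨e1, _⟩ | ⟨e1, _⟩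
      · exact Or.inl e1
      · exact Or.inr e1
    rcases hb2 with h2v | h2v
    · exact leafA b k hk hkodd 1 (Or.inl rfl)
        (fun p hp1 hp2 => by have := hconst p hp1 hp2; omega)
        m hm hinit v hv1
    · exact leafA b k hk hkodd (-1) (Or.inr rfl)
        (fun p hp1 hp2 => by have := hconst p hp1 hp2; omega)
        m hm hinit v hv1
end

section
/- Let k ≥ 1 and let b_1, …, b_k be nonzero even integers. Write the continued fraction value [b_1, …, b_k] = n/d in lowest terms with d > 0 (this value is nonzero, with |value| < 1). Then exactly one of n and d is even; moreover, d is even if and only if k is odd (equivalently, n is even if and only if k is even). -/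
lemma inv_natAbs_aux (q : ℚ) (hq : 0 < q.num) :
    (q⁻¹).num.natAbs = q.den ∧ (q⁻¹).den = q.num.natAbs := by
  have hco : Nat.Coprime (q.den : ℤ).natAbs q.num.natAbs := by
    simpa [Int.natAbs_natCast] using q.reduced.symm
  have hinv : q⁻¹ = ((q.den : ℤ) : ℚ) / (q.num : ℚ) := by
    rw [Rat.inv_def, Rat.divInt_eq_div]
  constructor
  · rw [hinv, Rat.num_div_eq_of_coprime hq hco]; simp
  · have := Rat.den_div_eq_of_coprime hq hco
    rw [hinv]
    omega

lemma inv_natAbs (q : ℚ) (hq : q ≠ 0) :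
    (q⁻¹).num.natAbs = q.den ∧ (q⁻¹).den = q.num.natAbs := by
  rcases lt_or_gt_of_ne (Rat.num_ne_zero.mpr hq) with h | h
  · have hpos : 0 < (-q).num := by rw [Rat.num_neg_eq_neg_num]; omega
    have := inv_natAbs_aux (-q) hpos
    rw [Rat.inv_neg, Rat.num_neg_eq_neg_num, Rat.den_neg_eq_den,
      Rat.den_neg_eq_den, Rat.num_neg_eq_neg_num, Int.natAbs_neg, Int.natAbs_neg] at this
    exact this
  · exact inv_natAbs_aux q h

lemma sub_num_den (a : ℤ) (q : ℚ) :
    ((a : ℚ) - q).num = a * q.den - q.num ∧ ((a : ℚ) - q).den = q.den := by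
  have hd : (0 : ℤ) < (q.den : ℤ) := by exact_mod_cast q.pos
  have hd0 : ((q.den : ℤ) : ℚ) ≠ 0 := by exact_mod_cast hd.ne'
  have hco : Nat.Coprime (a * q.den - q.num).natAbs (q.den : ℤ).natAbs := by
    have h1 : IsCoprime q.num (q.den : ℤ) := by
      rw [Int.isCoprime_iff_gcd_eq_one]; exact q.reduced
    have h2 : IsCoprime (a * q.den - q.num) (q.den : ℤ) := by
      have := (h1.neg_left).add_mul_right_left a
      simpa [sub_eq_add_neg, add_comm] using this
    rw [Int.isCoprime_iff_gcd_eq_one] at h2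
    exact h2
  have hqd : q * ((q.den : ℤ) : ℚ) = (q.num : ℚ) := by
    push_cast
    exact Rat.mul_den_eq_num q
  have heq : (a : ℚ) - q = ((a * q.den - q.num : ℤ) : ℚ) / ((q.den : ℤ) : ℚ) := by
    rw [eq_div_iff hd0, sub_mul, hqd]
    push_cast
    ring
  constructor
  · rw [heq, Rat.num_div_eq_of_coprime hd hco]
  · have := Rat.den_div_eq_of_coprime hd hco
    rw [heq]; omega

lemma key (l : List ℤ) (h : ∀ a ∈ l, a ≠ 0 ∧ Even a) :
    |cf (l.map (Int.cast : ℤ → ℚ))| < 1 ∧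
    (l ≠ [] → cf (l.map (Int.cast : ℤ → ℚ)) ≠ 0) ∧
    (Even (cf (l.map (Int.cast : ℤ → ℚ))).num ↔ Even l.length) ∧
    (Even (cf (l.map (Int.cast : ℤ → ℚ))).den ↔ Odd l.length) := by
  induction l with
  | nil => simp [cf]
  | cons a t ih =>
    obtain ⟨ha0, hae⟩ := h a List.mem_cons_self
    obtain ⟨ih1, _, ih3, ih4⟩ := ih (fun x hx => h x (List.mem_cons_of_mem a hx))
    set v' := cf (t.map (Int.cast : ℤ → ℚ)) with hv'
    have ha2 : (2 : ℤ) ≤ |a| := Int.le_of_dvd (abs_pos.mpr ha0) ((dvd_abs 2 a).mpr hae.two_dvd)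
    have ha2' : (2 : ℚ) ≤ |(a : ℚ)| := by
      rw [← Int.cast_abs]; exact_mod_cast ha2
    have hq1 : 1 < |(a : ℚ) - v'| := by
      have := abs_sub_abs_le_abs_sub (a : ℚ) v'
      linarith
    have hqne : (a : ℚ) - v' ≠ 0 := by
      intro h0; rw [h0] at hq1; simp at hq1; linarith
    have hcf : cf ((a :: t).map (Int.cast : ℤ → ℚ)) = ((a : ℚ) - v')⁻¹ := by
      simp [cf, hv']
    obtain ⟨hn, hd⟩ := sub_num_den a v'
    obtain ⟨hin, hid⟩ := inv_natAbs ((a : ℚ) - v') hqne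
    have hpar : Even (a * (v'.den : ℤ) - v'.num) ↔ Even v'.num := by
      have had : Even (a * (v'.den : ℤ)) := hae.mul_right _
      rcases had with ⟨x, hx⟩
      constructor
      · rintro ⟨y, hy⟩; exact ⟨x - y, by omega⟩
      · rintro ⟨y, hy⟩; exact ⟨x - y, by omega⟩
    refine ⟨?_, ?_, ?_, ?_⟩
    · rw [hcf, abs_inv, inv_lt_one_iff₀]; right; exact hq1
    · intro _; rw [hcf]; exact inv_ne_zero hqne
    · rw [hcf, ← Int.natAbs_even, hin, hd, ih4, List.length_cons, Nat.odd_iff, Nat.even_iff]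
      omega
    · rw [hcf, hid, Int.natAbs_even, hn, hpar, ih3, List.length_cons, Nat.odd_iff, Nat.even_iff]
      omega

theorem stmt_18 (k : ℕ) (hk : 1 ≤ k) (b : ℕ → ℤ)
    (hb : ∀ i, 1 ≤ i → i ≤ k → b i ≠ 0 ∧ Even (b i))
    (v : ℚ) (hv : v = cf ((List.range k).map fun i => ((b (i + 1) : ℚ)))) :
    v ≠ 0 ∧ |v| < 1 ∧ Xor' (Even v.num) (Even v.den) ∧
      (Even v.den ↔ Odd k) ∧ (Even v.num ↔ Even k) := by
  set l : List ℤ := (List.range k).map (fun i => b (i + 1)) with hl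
  have hml : (List.range k).map (fun i => ((b (i + 1) : ℚ))) = l.map (Int.cast : ℤ → ℚ) := by
    simp [hl, List.map_map, Function.comp]
  have hlen : l.length = k := by simp [hl]
  have hmem : ∀ a ∈ l, a ≠ 0 ∧ Even a := by
    intro a ha
    rw [hl] at ha
    simp only [List.mem_map, List.mem_range] at ha
    obtain ⟨i, hi, rfl⟩ := ha
    exact hb (i + 1) (by omega) (by omega)
  have hne : l ≠ [] := by
    intro h0; rw [h0] at hlen; simp at hlen; omega
  obtain ⟨h1, h2, h3, h4⟩ := key l hmem
  rw [hml] at hv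
  rw [hlen] at h3 h4
  refine ⟨hv ▸ h2 hne, hv ▸ h1, ?_, hv ▸ h4, hv ▸ h3⟩
  rw [hv]
  rcases Nat.even_or_odd k with he | ho
  · exact Or.inl ⟨h3.mpr he, fun hd => (Nat.not_odd_iff_even.mpr he) (h4.mp hd)⟩
  · exact Or.inr ⟨h4.mpr ho, fun hn => (Nat.not_even_iff_odd.mpr ho) (h3.mp hn)⟩
end
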